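/- arXiv:2107.05069 — 2 statements merged into one kernel-verified Lean document; each statement's English description precedes it below -/
import Mathlib

section
/- A nontrivial protoalgebraic logic ⊢ has an algebraic semantics if and only if there exist two distinct formulas ε and δ that are logically equivalent in ⊢ (i.e., δ'(ε, z⃗) ⊣⊢ δ'(δ, z⃗) for every formula δ'(x, z⃗)). -/
/-- An algebraic signature: a type of operation symbols with arities. -/
structure Sig : Type 1 where
  Op : Type
  ar : Op → ℕ

/-- Formulas (terms) over a signature, with variables indexed by ℕ. -/
inductive Fm (L : Sig) : Type where
  | var : ℕ → Fm L
  | op : (f : L.Op) → (Fin (L.ar f) → Fm L) → Fm L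

/-- An algebra for the signature `L`. -/
structure Alg (L : Sig) : Type 1 where
  carrier : Type
  interp : (f : L.Op) → (Fin (L.ar f) → carrier) → carrier

/-- Evaluation of a formula in an algebra under a valuation of the variables. -/
def Fm.eval {L : Sig} (A : Alg L) (v : ℕ → A.carrier) : Fm L → A.carrier
  | .var n => v n
  | .op f as => A.interp f (fun i => (as i).eval A v)

/-- Substitution (endomorphism of the formula algebra). -/
def Fm.subst {L : Sig} (σ : ℕ → Fm L) : Fm L → Fm L
  | .var n => σ n
  | .op f as => .op f (fun i => (as i).subst σ)

/-- The set of variables occurring in a formula. -/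
def Fm.vars {L : Sig} : Fm L → Set ℕ
  | .var n => {n}
  | .op _ as => ⋃ i, (as i).vars

/-- Substitute the formula `ψ` for the variable `v` in `φ`. -/
def Fm.subst1 {L : Sig} (v : ℕ) (ψ : Fm L) (φ : Fm L) : Fm L :=
  φ.subst (fun n => if n = v then ψ else .var n)

/-- A logic: a substitution-invariant (finitary or not) consequence relation on formulas. -/
structure Logic (L : Sig) : Type where
  deriv : Set (Fm L) → Fm L → Prop
  axm : ∀ Γ φ, φ ∈ Γ → deriv Γ φ
  mono : ∀ Γ Δ φ, Γ ⊆ Δ → deriv Γ φ → deriv Δ φ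
  cut : ∀ Γ Δ φ, deriv Γ φ → (∀ γ ∈ Γ, deriv Δ γ) → deriv Δ φ
  substInv : ∀ (σ : ℕ → Fm L) Γ φ, deriv Γ φ → deriv (Fm.subst σ '' Γ) (φ.subst σ)

/-- A logical matrix: an algebra with a set of designated elements. -/
structure LMatrix (L : Sig) : Type 1 where
  alg : Alg L
  F : Set alg.carrier

/-- The consequence relation induced by a class of matrices. -/
def inducedBy {L : Sig} (M : Set (LMatrix L)) (Γ : Set (Fm L)) (φ : Fm L) : Prop :=
  ∀ m ∈ M, ∀ v : ℕ → m.alg.carrier,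
    (∀ γ ∈ Γ, γ.eval m.alg v ∈ m.F) → φ.eval m.alg v ∈ m.F

/-- `M` is a matrix semantics for the logic `ℒ`. -/
def IsMatrixSemantics {L : Sig} (ℒ : Logic L) (M : Set (LMatrix L)) : Prop :=
  ∀ Γ φ, ℒ.deriv Γ φ ↔ inducedBy M Γ φ

/-- Equational consequence relative to a class of algebras (equations as pairs of formulas). -/
def eqConseq {L : Sig} (K : Set (Alg L)) (Θ : Set (Fm L × Fm L)) (e : Fm L × Fm L) : Prop :=
  ∀ A ∈ K, ∀ v : ℕ → A.carrier,
    (∀ p ∈ Θ, p.1.eval A v = p.2.eval A v) → e.1.eval A v = e.2.eval A v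

/-- `τ(φ)`: the result of substituting `φ` for the variable `x` (= variable 0) in each
equation of `τ`. -/
def tauApp {L : Sig} (τ : Set (Fm L × Fm L)) (φ : Fm L) : Set (Fm L × Fm L) :=
  (fun e => (Fm.subst1 0 φ e.1, Fm.subst1 0 φ e.2)) '' τ

/-- `τ[Γ]`. -/
def tauAppSet {L : Sig} (τ : Set (Fm L × Fm L)) (Γ : Set (Fm L)) : Set (Fm L × Fm L) :=
  ⋃ γ ∈ Γ, tauApp τ γ

/-- `τ` is a set of equations in the single variable `x` (= variable 0). -/
def IsUnivalent {L : Sig} (τ : Set (Fm L × Fm L)) : Prop :=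
  ∀ e ∈ τ, e.1.vars ⊆ ({0} : Set ℕ) ∧ e.2.vars ⊆ ({0} : Set ℕ)

/-- `K` is a `τ`-algebraic semantics for `ℒ`: `Γ ⊢ φ` iff `τ[Γ] ⊨_K τ(φ)`. -/
def IsTauAlgSem {L : Sig} (ℒ : Logic L) (τ : Set (Fm L × Fm L)) (K : Set (Alg L)) : Prop :=
  IsUnivalent τ ∧ ∀ Γ φ, ℒ.deriv Γ φ ↔ ∀ e ∈ tauApp τ φ, eqConseq K (tauAppSet τ Γ) e

/-- `ℒ` has an algebraic semantics (admits an equational completeness theorem). -/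
def HasAlgSem {L : Sig} (ℒ : Logic L) : Prop :=
  ∃ (τ : Set (Fm L × Fm L)) (K : Set (Alg L)), IsTauAlgSem ℒ τ K

/-- `θ` is a congruence of the algebra `A`. -/
def IsCong {L : Sig} (A : Alg L) (θ : A.carrier → A.carrier → Prop) : Prop :=
  Equivalence θ ∧ ∀ (f : L.Op) (as bs : Fin (L.ar f) → A.carrier),
    (∀ i, θ (as i) (bs i)) → θ (A.interp f as) (A.interp f bs)

/-- The congruence of `A` generated by `X` (least congruence containing `X`). -/
def congGen {L : Sig} (A : Alg L) (X : Set (A.carrier × A.carrier))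
    (a c : A.carrier) : Prop :=
  ∀ θ, IsCong A θ → (∀ p ∈ X, θ p.1 p.2) → θ a c

/-- `p` is a unary polynomial function of `A`: `p(a) = φ^A(a, c⃗)` for a formula `φ(x, y⃗)`
and parameters `c⃗` from `A`. -/
def IsUnaryPoly {L : Sig} (A : Alg L) (p : A.carrier → A.carrier) : Prop :=
  ∃ (φ : Fm L) (c : ℕ → A.carrier),
    ∀ a, p a = φ.eval A (fun n => if n = 0 then a else c n)

/-- Compatibility of a relation with a set. -/
def Compatible {L : Sig} (A : Alg L) (θ : A.carrier → A.carrier → Prop)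
    (F : Set A.carrier) : Prop :=
  ∀ a c, θ a c → a ∈ F → c ∈ F

/-- The Leibniz congruence `Ω^A F`: the largest congruence of `A` compatible with `F`
(realized as the union of all congruences compatible with `F`). -/
def leibniz {L : Sig} (A : Alg L) (F : Set A.carrier) (a c : A.carrier) : Prop :=
  ∃ θ, IsCong A θ ∧ Compatible A θ F ∧ θ a c

/-- The formula algebra. -/
def FmAlg (L : Sig) : Alg L :=
  ⟨Fm L, fun f as => Fm.op f as⟩

/-- `ℒ` has no theorems. -/
def LacksTheorems {L : Sig} (ℒ : Logic L) : Prop :=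
  ¬ ∃ φ, ℒ.deriv ∅ φ

/-- `ℒ` is assertional. -/
def Assertional {L : Sig} (ℒ : Logic L) : Prop :=
  ∃ (M : Set (LMatrix L)) (φ : Fm L), IsMatrixSemantics ℒ M ∧ φ.vars ⊆ ({0} : Set ℕ) ∧
    ∀ m ∈ M, ∃ c : m.alg.carrier,
      (∀ a : m.alg.carrier, φ.eval m.alg (fun _ => a) = c) ∧ m.F = {c}

/-- `ℒ` is almost assertional. -/
def AlmostAssertional {L : Sig} (ℒ : Logic L) : Prop :=
  LacksTheorems ℒ ∧
  ∃ (M : Set (LMatrix L)) (φ : Fm L), IsMatrixSemantics ℒ M ∧ φ.vars ⊆ ({0} : Set ℕ) ∧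
    ∀ m ∈ M, m.F.Nonempty → ∃ c : m.alg.carrier,
      (∀ a : m.alg.carrier, φ.eval m.alg (fun _ => a) = c) ∧ m.F = {c}

/-- Two formulas are logically equivalent in `ℒ`. -/
def LogEquiv {L : Sig} (ℒ : Logic L) (ε δ : Fm L) : Prop :=
  ∀ (φ : Fm L) (v : ℕ),
    ℒ.deriv {Fm.subst1 v ε φ} (Fm.subst1 v δ φ) ∧
    ℒ.deriv {Fm.subst1 v δ φ} (Fm.subst1 v ε φ)

/-- `ℒ` is protoalgebraic: there is a set of formulas `Δ(x, y)` with `∅ ⊢ Δ(x, x)` and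
`x, Δ(x, y) ⊢ y`. -/
def Protoalgebraic {L : Sig} (ℒ : Logic L) : Prop :=
  ∃ Δ : Set (Fm L), (∀ ψ ∈ Δ, ψ.vars ⊆ ({0, 1} : Set ℕ)) ∧
    (∀ ψ ∈ Δ, ℒ.deriv ∅ (Fm.subst1 1 (Fm.var 0) ψ)) ∧
    ℒ.deriv ({Fm.var 0} ∪ Δ) (Fm.var 1)

/-- `ℒ` is nontrivial: `x ⊬ y`. -/
def NontrivialLogic {L : Sig} (ℒ : Logic L) : Prop :=
  ¬ ℒ.deriv {Fm.var 0} (Fm.var 1)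
namespace FmAux

open Fm

variable {L : Sig}

/-- Size of a formula. -/
def fsize : Fm L → ℕ
  | .var _ => 1
  | .op _ as => 1 + ∑ i, fsize (as i)

/-- Number of occurrences of variable 0. -/
def cnt0 : Fm L → ℕ
  | .var n => if n = 0 then 1 else 0
  | .op _ as => ∑ i, cnt0 (as i)

/-- A bound on the variables of a formula. -/
def maxVar : Fm L → ℕ
  | .var n => n
  | .op _ as => Finset.univ.sup fun i => maxVar (as i)

lemma one_le_fsize (t : Fm L) : 1 ≤ fsize t := by
  cases t with
  | var n => simp [fsize]
  | op f as => simp [fsize]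

lemma subst_congr {σ ρ : ℕ → Fm L} : ∀ {t : Fm L}, (∀ n ∈ t.vars, σ n = ρ n) →
    t.subst σ = t.subst ρ
  | .var n, h => by
      simpa [Fm.subst] using h n (by simp [Fm.vars])
  | .op f as, h => by
      simp only [Fm.subst, Fm.op.injEq, heq_eq_eq, true_and]
      funext i
      exact subst_congr (fun n hn => h n (by exact Set.mem_iUnion.2 ⟨i, hn⟩))

lemma subst_subst (σ ρ : ℕ → Fm L) : ∀ (t : Fm L),
    (t.subst σ).subst ρ = t.subst (fun n => (σ n).subst ρ)
  | .var n => rfl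
  | .op f as => by
      simp only [Fm.subst, Fm.op.injEq, heq_eq_eq, true_and]
      funext i
      exact subst_subst σ ρ (as i)

lemma subst_id : ∀ (t : Fm L), t.subst (fun n => .var n) = t
  | .var n => rfl
  | .op f as => by
      simp only [Fm.subst, Fm.op.injEq, heq_eq_eq, true_and]
      funext i
      exact subst_id (as i)

lemma eval_subst (A : Alg L) (v : ℕ → A.carrier) (σ : ℕ → Fm L) : ∀ (t : Fm L),
    (t.subst σ).eval A v = t.eval A (fun n => (σ n).eval A v)
  | .var n => rfl
  | .op f as => by
      simp only [Fm.subst, Fm.eval]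
      congr 1
      funext i
      exact eval_subst A v σ (as i)

lemma mem_vars_subst {σ : ℕ → Fm L} {k : ℕ} : ∀ {t : Fm L},
    (k ∈ (t.subst σ).vars ↔ ∃ n ∈ t.vars, k ∈ (σ n).vars)
  | .var n => by simp [Fm.subst, Fm.vars]
  | .op f as => by
      simp only [Fm.subst, Fm.vars, Set.mem_iUnion]
      constructor
      · rintro ⟨i, hi⟩
        rcases mem_vars_subst.1 hi with ⟨n, hn, hk⟩
        exact ⟨n, ⟨i, hn⟩, hk⟩
      · rintro ⟨n, ⟨i, hi⟩, hk⟩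
        exact ⟨i, mem_vars_subst.2 ⟨n, hi, hk⟩⟩

lemma lt_maxVar_not_mem {n : ℕ} : ∀ {t : Fm L}, maxVar t < n → n ∉ t.vars
  | .var m, h => by
      simp only [Fm.vars, Set.mem_singleton_iff]
      intro hh
      subst hh
      simp only [maxVar] at h
      omega
  | .op f as, h => by
      simp only [Fm.vars, Set.mem_iUnion]
      rintro ⟨i, hi⟩
      exact lt_maxVar_not_mem (lt_of_le_of_lt (by
        exact Finset.le_sup (f := fun i => maxVar (as i)) (Finset.mem_univ i)) h) hi

lemma subst1_not_mem {v : ℕ} {a : Fm L} {t : Fm L} (h : v ∉ t.vars) :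
    Fm.subst1 v a t = t := by
  rw [Fm.subst1]
  calc t.subst _ = t.subst (fun n => .var n) := by
        apply subst_congr
        intro n hn
        have : n ≠ v := fun hnv => h (hnv ▸ hn)
        simp [this]
    _ = t := subst_id t

lemma cnt0_pos_iff : ∀ {t : Fm L}, 0 < cnt0 t ↔ 0 ∈ t.vars
  | .var n => by
      by_cases h : n = 0 <;> simp [cnt0, Fm.vars, h]
      · exact fun hh => h hh.symm
  | .op f as => by
      simp only [cnt0, Fm.vars, Set.mem_iUnion]
      rw [pos_iff_ne_zero, Ne, Finset.sum_eq_zero_iff]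
      push_neg
      constructor
      · rintro ⟨i, _, hi⟩
        exact ⟨i, cnt0_pos_iff.1 (by omega)⟩
      · rintro ⟨i, hi⟩
        exact ⟨i, Finset.mem_univ i, by have := cnt0_pos_iff.2 hi; omega⟩

/-- Additive form of the size-of-substitution formula. -/
lemma fsize_subst1 (a : Fm L) : ∀ (t : Fm L),
    fsize (Fm.subst1 0 a t) + cnt0 t = fsize t + cnt0 t * fsize a
  | .var n => by
      by_cases h : n = 0 <;> simp [Fm.subst1, Fm.subst, fsize, cnt0, h] <;> omega
  | .op f as => by
      have : Fm.subst1 0 a (.op f as) = .op f (fun i => Fm.subst1 0 a (as i)) := rfl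
      rw [this]
      simp only [fsize, cnt0]
      have h := fun i => fsize_subst1 a (as i)
      calc 1 + (∑ i, fsize (Fm.subst1 0 a (as i))) + ∑ i, cnt0 (as i)
          = 1 + ∑ i, (fsize (Fm.subst1 0 a (as i)) + cnt0 (as i)) := by
            rw [Finset.sum_add_distrib]; ring
        _ = 1 + ∑ i, (fsize (as i) + cnt0 (as i) * fsize a) := by
            congr 1; exact Finset.sum_congr rfl (fun i _ => h i)
        _ = 1 + ∑ i, fsize (as i) + (∑ i, cnt0 (as i)) * fsize a := by
            rw [Finset.sum_add_distrib, Finset.sum_mul]; ring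

lemma cnt0_subst1 (a : Fm L) : ∀ (t : Fm L),
    cnt0 (Fm.subst1 0 a t) = cnt0 t * cnt0 a
  | .var n => by
      by_cases h : n = 0 <;> simp [Fm.subst1, Fm.subst, cnt0, h]
  | .op f as => by
      have : Fm.subst1 0 a (.op f as) = .op f (fun i => Fm.subst1 0 a (as i)) := rfl
      rw [this]
      simp only [cnt0, Finset.sum_mul]
      exact Finset.sum_congr rfl (fun i _ => cnt0_subst1 a (as i))

lemma cnt0_le_fsize : ∀ (t : Fm L), cnt0 t ≤ fsize t
  | .var n => by by_cases h : n = 0 <;> simp [cnt0, fsize, h]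
  | .op f as => by
      simp only [cnt0, fsize]
      exact le_trans (Finset.sum_le_sum fun i _ => cnt0_le_fsize (as i)) (by omega)

end FmAux
namespace FmAux

variable {L : Sig}

lemma mem_le_maxVar {n : ℕ} : ∀ {t : Fm L}, n ∈ t.vars → n ≤ maxVar t
  | .var m, h => by
      simp only [Fm.vars, Set.mem_singleton_iff] at h
      subst h; simp [maxVar]
  | .op f as, h => by
      simp only [Fm.vars, Set.mem_iUnion] at h
      rcases h with ⟨i, hi⟩
      exact le_trans (mem_le_maxVar hi)
        (Finset.le_sup (f := fun i => maxVar (as i)) (Finset.mem_univ i))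

lemma deriv_single_trans (ℒ : Logic L) {a b c : Fm L}
    (h1 : ℒ.deriv {a} b) (h2 : ℒ.deriv {b} c) : ℒ.deriv {a} c := by
  refine ℒ.cut {b} {a} c h2 ?_
  intro γ hγ
  rw [Set.mem_singleton_iff] at hγ
  subst hγ
  exact h1

lemma deriv_subst_single (ℒ : Logic L) {a b : Fm L} (σ : ℕ → Fm L)
    (h : ℒ.deriv {a} b) : ℒ.deriv {a.subst σ} (b.subst σ) := by
  have := ℒ.substInv σ {a} b h
  rwa [Set.image_singleton] at this

lemma subst1_var_self (a : Fm L) (v : ℕ) : Fm.subst1 v a (.var v) = a := by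
  simp [Fm.subst1, Fm.subst]

lemma logEquiv_refl (ℒ : Logic L) (t : Fm L) : LogEquiv ℒ t t := by
  intro φ v
  exact ⟨ℒ.axm _ _ rfl, ℒ.axm _ _ rfl⟩

lemma logEquiv_symm {ℒ : Logic L} {a b : Fm L} (h : LogEquiv ℒ a b) : LogEquiv ℒ b a := by
  intro φ v
  exact ⟨(h φ v).2, (h φ v).1⟩

lemma logEquiv_trans {ℒ : Logic L} {a b c : Fm L}
    (h1 : LogEquiv ℒ a b) (h2 : LogEquiv ℒ b c) : LogEquiv ℒ a c := by
  intro φ v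
  exact ⟨deriv_single_trans ℒ (h1 φ v).1 (h2 φ v).1,
    deriv_single_trans ℒ (h2 φ v).2 (h1 φ v).2⟩

lemma logEquiv_deriv_single {ℒ : Logic L} {a b : Fm L} (h : LogEquiv ℒ a b) :
    ℒ.deriv {a} b := by
  have := (h (.var 0) 0).1
  rwa [subst1_var_self, subst1_var_self] at this

/-- `subst1 w t (subst1 v (var w) φ) = subst1 v t φ` when `w` is fresh for `φ`. -/
lemma subst1_rename {φ : Fm L} {v w : ℕ} (hw : w ∉ φ.vars) (t : Fm L) :
    Fm.subst1 w t (Fm.subst1 v (.var w) φ) = Fm.subst1 v t φ := by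
  rw [Fm.subst1, Fm.subst1, subst_subst, Fm.subst1]
  apply subst_congr
  intro n hn
  by_cases hv : n = v
  · simp [hv, Fm.subst1, Fm.subst]
  · have hnw : n ≠ w := fun hh => hw (hh ▸ hn)
    simp [hv, Fm.subst1, Fm.subst, hnw]

/-- Core one-direction lemma: substitution instances of logically equivalent formulas
generate derivations in每 context. -/
lemma deriv_subst1_subst {ℒ : Logic L} {ε δ : Fm L}
    (h : ∀ φ v, ℒ.deriv {Fm.subst1 v ε φ} (Fm.subst1 v δ φ))
    (σ : ℕ → Fm L) (φ : Fm L) (v : ℕ) :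
    ℒ.deriv {Fm.subst1 v (ε.subst σ) φ} (Fm.subst1 v (δ.subst σ) φ) := by
  classical
  set w : ℕ := maxVar φ + maxVar ε + maxVar δ + v + 1 with hw
  set N : ℕ := w + 1 with hN
  have hwφ : w ∉ φ.vars := lt_maxVar_not_mem (by omega)
  set φ₀ : Fm L := Fm.subst1 v (.var w) φ with hφ₀
  have claim1 : ∀ t : Fm L, Fm.subst1 w t φ₀ = Fm.subst1 v t φ :=
    fun t => subst1_rename hwφ t
  set sh : ℕ → Fm L := fun n => if n = w then .var w else .var (n + N) with hsh
  set Ψ : Fm L := φ₀.subst sh with hΨ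
  have stepA : ∀ X : Fm L, Fm.subst1 w X Ψ =
      φ₀.subst (fun n => if n = w then X else .var (n + N)) := by
    intro X
    rw [hΨ, Fm.subst1, subst_subst]
    congr 1
    funext n
    by_cases hnw : n = w
    · simp [hsh, hnw, Fm.subst1, Fm.subst]
    · have : n + N ≠ w := by omega
      simp [hsh, hnw, Fm.subst1, Fm.subst, this]
  set ρ : ℕ → Fm L := fun n => if n < N then σ n else .var (n - N) with hρ
  have stepC : ∀ X : Fm L, maxVar X < N →
      (Fm.subst1 w X Ψ).subst ρ = Fm.subst1 v (X.subst σ) φ := by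
    intro X hX
    rw [stepA, subst_subst, ← claim1 (X.subst σ), Fm.subst1]
    apply subst_congr
    intro n hn
    by_cases hnw : n = w
    · subst hnw
      simp only [if_pos rfl]
      apply subst_congr
      intro k hk
      have : k < N := lt_of_le_of_lt (mem_le_maxVar hk) hX
      simp [hρ, this]
    · have h1 : ¬ (n + N < N) := by omega
      have h2 : n + N - N = n := by omega
      simp [hnw, hρ, Fm.subst, h1, h2]
  have hε : maxVar ε < N := by omega
  have hδ : maxVar δ < N := by omega
  have hinst := h Ψ w
  have := deriv_subst_single ℒ ρ hinst
  rwa [stepC ε hε, stepC δ hδ] at this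

lemma logEquiv_subst {ℒ : Logic L} {ε δ : Fm L} (h : LogEquiv ℒ ε δ) (σ : ℕ → Fm L) :
    LogEquiv ℒ (ε.subst σ) (δ.subst σ) := by
  intro φ v
  exact ⟨deriv_subst1_subst (fun φ v => (h φ v).1) σ φ v,
    deriv_subst1_subst (fun φ v => (h φ v).2) σ φ v⟩

lemma logEquiv_subst1 {ℒ : Logic L} {ε δ : Fm L} (h : LogEquiv ℒ ε δ) (a : Fm L) (u : ℕ) :
    LogEquiv ℒ (Fm.subst1 u a ε) (Fm.subst1 u a δ) :=
  logEquiv_subst h _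

end FmAux
namespace FmAux

variable {L : Sig}

/-- Context closure (one direction). -/
lemma deriv_subst1_ctx {ℒ : Logic L} {a b : Fm L}
    (h : ∀ φ v, ℒ.deriv {Fm.subst1 v a φ} (Fm.subst1 v b φ))
    (C : Fm L) (w₀ : ℕ) (φ : Fm L) (v : ℕ) :
    ℒ.deriv {Fm.subst1 v (Fm.subst1 w₀ a C) φ} (Fm.subst1 v (Fm.subst1 w₀ b C) φ) := by
  classical
  set w : ℕ := maxVar φ + maxVar C + maxVar a + maxVar b + v + w₀ + 1 with hw
  set N : ℕ := w + 1 with hN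
  have hwφ : w ∉ φ.vars := lt_maxVar_not_mem (by omega)
  set φ₀ : Fm L := Fm.subst1 v (.var w) φ with hφ₀
  have claim1 : ∀ t : Fm L, Fm.subst1 w t φ₀ = Fm.subst1 v t φ :=
    fun t => subst1_rename hwφ t
  set C2 : Fm L := C.subst (fun k => if k = w₀ then .var w else .var (k + 2*N)) with hC2
  set sh : ℕ → Fm L := fun n => if n = w then C2 else .var (n + N) with hsh
  set Ψ : Fm L := φ₀.subst sh with hΨ
  have stepA : ∀ X : Fm L, Fm.subst1 w X Ψ =
      φ₀.subst (fun n => if n = w then Fm.subst1 w X C2 else .var (n + N)) := by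
    intro X
    rw [hΨ, Fm.subst1, subst_subst]
    congr 1
    funext n
    by_cases hnw : n = w
    · simp [hsh, hnw, Fm.subst1]
    · have : n + N ≠ w := by omega
      simp [hsh, hnw, Fm.subst1, Fm.subst, this]
  have stepA2 : ∀ X : Fm L, Fm.subst1 w X C2 =
      C.subst (fun k => if k = w₀ then X else .var (k + 2*N)) := by
    intro X
    rw [hC2, Fm.subst1, subst_subst]
    congr 1
    funext k
    by_cases hk : k = w₀
    · simp [hk, Fm.subst]
    · have : k + 2*N ≠ w := by omega
      simp [hk, Fm.subst, this]
  set ρ : ℕ → Fm L := fun n =>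
    if n < N then .var n else if n < 2*N then .var (n - N) else .var (n - 2*N) with hρ
  have stepC : ∀ X : Fm L, maxVar X < N →
      (Fm.subst1 w X Ψ).subst ρ = Fm.subst1 v (Fm.subst1 w₀ X C) φ := by
    intro X hX
    rw [stepA, stepA2, subst_subst, ← claim1 (Fm.subst1 w₀ X C)]
    conv_rhs => rw [Fm.subst1]
    apply subst_congr
    intro n hn
    by_cases hnw : n = w
    · subst hnw
      simp only [eq_self_iff_true, if_true]
      rw [subst_subst, Fm.subst1]
      apply subst_congr
      intro k hk
      by_cases hkw : k = w₀
      · simp only [if_pos hkw]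
        calc X.subst ρ = X.subst (fun n => .var n) := by
              apply subst_congr
              intro k' hk'
              have : k' < N := lt_of_le_of_lt (mem_le_maxVar hk') hX
              simp [hρ, this]
          _ = X := subst_id X
      · have h1 : ¬ (k + 2*N < N) := by omega
        have h2 : ¬ (k + 2*N < 2*N) := by omega
        have h3 : k + 2*N - 2*N = k := by omega
        simp [hkw, Fm.subst, hρ, h1, h2, h3]
    · -- n ∈ vars φ₀ and n ≠ w, so n ∈ vars φ and n < N
      have hnφ : n ∈ φ.vars := by
        rw [hφ₀, Fm.subst1] at hn
        rcases mem_vars_subst.1 hn with ⟨m, hm, hmem⟩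
        by_cases hmv : m = v
        · exfalso
          apply hnw
          simp only [hmv, if_pos rfl, Fm.vars, Set.mem_singleton_iff] at hmem
          exact hmem
        · simp only [hmv, if_neg hmv, Fm.vars, Set.mem_singleton_iff] at hmem
          exact hmem ▸ hm
      have hnN : n < N := by
        have := mem_le_maxVar hnφ
        omega
      have h1 : ¬ (n + N < N) := by omega
      have h2 : n + N < 2*N := by omega
      have h3 : n + N - N = n := by omega
      simp [hnw, Fm.subst, hρ, h1, h2, h3]
  have hεa : maxVar a < N := by omega
  have hεb : maxVar b < N := by omega
  have hinst := h Ψ w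
  have := deriv_subst_single ℒ ρ hinst
  rwa [stepC a hεa, stepC b hεb] at this

lemma logEquiv_ctx {ℒ : Logic L} {a b : Fm L} (h : LogEquiv ℒ a b) (C : Fm L) (w₀ : ℕ) :
    LogEquiv ℒ (Fm.subst1 w₀ a C) (Fm.subst1 w₀ b C) := by
  intro φ v
  exact ⟨deriv_subst1_ctx (fun φ v => (h φ v).1) C w₀ φ v,
    deriv_subst1_ctx (fun φ v => (h φ v).2) C w₀ φ v⟩

/-- Logical equivalence is a congruence for the connectives. -/
lemma logEquiv_op {ℒ : Logic L} (g : L.Op) (as bs : Fin (L.ar g) → Fm L)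
    (h : ∀ i, LogEquiv ℒ (as i) (bs i)) : LogEquiv ℒ (.op g as) (.op g bs) := by
  classical
  set W : ℕ := (Finset.univ.sup fun i => maxVar (as i)) +
      (Finset.univ.sup fun i => maxVar (bs i)) + 1 with hW
  have hWas : ∀ i, W ∉ (as i).vars := by
    intro i
    apply lt_maxVar_not_mem
    have hle : maxVar (as i) ≤ Finset.univ.sup fun j => maxVar (as j) :=
      Finset.le_sup (f := fun j => maxVar (as j)) (Finset.mem_univ i)
    omega
  have hWbs : ∀ i, W ∉ (bs i).vars := by
    intro i
    apply lt_maxVar_not_mem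
    have hle : maxVar (bs i) ≤ Finset.univ.sup fun j => maxVar (bs j) :=
      Finset.le_sup (f := fun j => maxVar (bs j)) (Finset.mem_univ i)
    omega
  set mix : ℕ → Fm L := fun k => .op g (fun i => if i.val < k then bs i else as i) with hmix
  have key : ∀ k, LogEquiv ℒ (mix 0) (mix k) := by
    intro k
    induction k with
    | zero => exact logEquiv_refl ℒ _
    | succ k ih =>
      refine logEquiv_trans ih ?_
      by_cases hk : k < L.ar g
      · set ik : Fin (L.ar g) := ⟨k, hk⟩ with hik
        set C : Fm L := .op g (fun i => if i.val = k then .var W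
          else if i.val < k then bs i else as i) with hC
        have e1 : Fm.subst1 W (as ik) C = mix k := by
          rw [hC, hmix, Fm.subst1]
          show Fm.op g _ = Fm.op g _
          congr 1
          funext i
          by_cases hik' : i.val = k
          · have : i = ik := Fin.ext hik'
            subst this
            simp [Fm.subst, subst1_var_self, Fm.subst1, hik']
          · by_cases hlt : i.val < k
            · simp only [if_neg hik', if_pos hlt]
              exact subst1_not_mem (hWbs i)
            · simp only [if_neg hik', if_neg hlt]
              exact subst1_not_mem (hWas i)
        have e2 : Fm.subst1 W (bs ik) C = mix (k+1) := by
          rw [hC, hmix, Fm.subst1]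
          show Fm.op g _ = Fm.op g _
          congr 1
          funext i
          by_cases hik' : i.val = k
          · have : i = ik := Fin.ext hik'
            subst this
            have : (ik : Fin (L.ar g)).val < k + 1 := by omega
            simp [Fm.subst, this, Fm.subst1, hik']
          · by_cases hlt : i.val < k
            · have : i.val < k + 1 := by omega
              simp only [if_neg hik', if_pos hlt, if_pos this]
              exact subst1_not_mem (hWbs i)
            · have : ¬ (i.val < k + 1) := by omega
              simp only [if_neg hik', if_neg hlt, if_neg this]
              exact subst1_not_mem (hWas i)
        rw [← e1, ← e2]
        exact logEquiv_ctx (h ik) C W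
      · have : mix k = mix (k+1) := by
          rw [hmix]
          show Fm.op g _ = Fm.op g _
          congr 1
          funext i
          have h1 : i.val < k := by omega
          have h2 : i.val < k + 1 := by omega
          simp [h1, h2]
        rw [← this]
        exact logEquiv_refl ℒ _
  have e0 : mix 0 = .op g as := by
    have hfun : (fun i : Fin (L.ar g) => if i.val < 0 then bs i else as i) = as := by
      funext i; simp
    simp only [hmix, hfun]
  have eend : mix (L.ar g) = .op g bs := by
    have hfun : (fun i : Fin (L.ar g) => if i.val < L.ar g then bs i else as i) = bs := by
      funext i; simp [i.isLt]
    simp only [hmix, hfun]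
  have := key (L.ar g)
  rwa [e0, eend] at this

end FmAux
namespace FmAux

variable {L : Sig} {ℒ : Logic L}

lemma two_le_fsize_of_var_mem {t : Fm L} (h0 : 0 ∈ t.vars) (hop : ∀ n, t ≠ .var n) :
    2 ≤ fsize t := by
  cases t with
  | var n => exact absurd rfl (hop n)
  | op f as =>
    simp only [Fm.vars, Set.mem_iUnion] at h0
    rcases h0 with ⟨i, hi⟩
    have h1 : 1 ≤ fsize (as i) := one_le_fsize _
    have h2 : fsize (as i) ≤ ∑ j, fsize (as j) :=
      Finset.single_le_sum (f := fun j => fsize (as j)) (fun j _ => Nat.zero_le _)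
        (Finset.mem_univ i)
    simp only [fsize]
    omega

lemma op_ne_var {f : L.Op} {as : Fin (L.ar f) → Fm L} : ∀ n, Fm.op f as ≠ Fm.var n :=
  fun _ h => by cases h

/-- If `t₀` is a non-variable formula containing `x`, then no instance of a unary
non-variable formula can equal `t₀`. -/
lemma subst1_op_ne {t₀ : Fm L} (h0 : 0 ∈ t₀.vars) (hop : ∀ n, t₀ ≠ .var n)
    {g : L.Op} {bs : Fin (L.ar g) → Fm L} :
    Fm.subst1 0 t₀ (Fm.op g bs) ≠ t₀ := by
  intro heq
  by_cases hk : 0 ∈ (Fm.op g bs).vars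
  · have hk1 : 1 ≤ cnt0 (Fm.op g bs) := cnt0_pos_iff.2 hk
    have ht2 : 2 ≤ fsize t₀ := two_le_fsize_of_var_mem h0 hop
    have hβ2 : 2 ≤ fsize (Fm.op g bs) := two_le_fsize_of_var_mem hk op_ne_var
    have hsz := fsize_subst1 t₀ (Fm.op g bs)
    rw [heq] at hsz
    have hks : cnt0 (Fm.op g bs) + fsize t₀ ≤ cnt0 (Fm.op g bs) * fsize t₀ + 1 := by
      nlinarith
    omega
  · rw [subst1_not_mem hk] at heq
    rw [heq] at hk
    exact hk h0

lemma subst1_injective_unary {t₀ : Fm L} (h0 : 0 ∈ t₀.vars) (hop : ∀ n, t₀ ≠ .var n) :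
    ∀ (α : Fm L), α.vars ⊆ ({0} : Set ℕ) → ∀ (β : Fm L), β.vars ⊆ ({0} : Set ℕ) →
      Fm.subst1 0 t₀ α = Fm.subst1 0 t₀ β → α = β
  | .var n, hα, .var m, hβ, heq => by
      have hn : n = 0 := by simpa using hα (by simp [Fm.vars] : n ∈ (Fm.var n : Fm L).vars)
      have hm : m = 0 := by simpa using hβ (by simp [Fm.vars] : m ∈ (Fm.var m : Fm L).vars)
      rw [hn, hm]
  | .var n, hα, .op g bs, hβ, heq => by
      have hn : n = 0 := by simpa using hα (by simp [Fm.vars] : n ∈ (Fm.var n : Fm L).vars)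
      subst hn
      rw [subst1_var_self] at heq
      exact absurd heq.symm (subst1_op_ne h0 hop)
  | .op g bs, hα, .var n, hβ, heq => by
      have hn : n = 0 := by simpa using hβ (by simp [Fm.vars] : n ∈ (Fm.var n : Fm L).vars)
      subst hn
      rw [subst1_var_self] at heq
      exact absurd heq (subst1_op_ne h0 hop)
  | .op f as, hα, .op g bs, hβ, heq => by
      have hd1 : Fm.subst1 0 t₀ (.op f as) = .op f (fun i => Fm.subst1 0 t₀ (as i)) := rfl
      have hd2 : Fm.subst1 0 t₀ (.op g bs) = .op g (fun i => Fm.subst1 0 t₀ (bs i)) := rfl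
      rw [hd1, hd2] at heq
      injection heq with h1 h2
      subst h1
      have h2' := eq_of_heq h2
      have : as = bs := by
        funext i
        refine subst1_injective_unary h0 hop (as i) ?_ (bs i) ?_ (congrFun h2' i)
        · exact fun n hn => hα (Set.mem_iUnion.2 ⟨i, hn⟩)
        · exact fun n hn => hβ (Set.mem_iUnion.2 ⟨i, hn⟩)
      rw [this]

/-- A nontrivial protoalgebraic logic has a unary theorem containing the variable. -/
lemma exists_unary_theorem (hnt : NontrivialLogic ℒ) (hproto : Protoalgebraic ℒ) :
    ∃ t : Fm L, ℒ.deriv ∅ t ∧ 0 ∈ t.vars ∧ t.vars ⊆ ({0} : Set ℕ) ∧ ∀ n, t ≠ .var n := by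
  obtain ⟨Δ, hvars, hthm, hmp⟩ := hproto
  have hex : ∃ ψ ∈ Δ, (ψ.vars).Nonempty := by
    by_contra hno
    push_neg at hno
    apply hnt
    refine ℒ.cut ({Fm.var 0} ∪ Δ) {Fm.var 0} (Fm.var 1) hmp ?_
    rintro γ (hγ | hγ)
    · rw [Set.mem_singleton_iff] at hγ; subst hγ; exact ℒ.axm _ _ rfl
    · have h1 : Fm.subst1 1 (Fm.var 0) γ = γ := by
        apply subst1_not_mem
        intro hmem
        have h2 := hno γ hγ
        rw [h2] at hmem
        exact hmem
      have h3 := hthm γ hγ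
      rw [h1] at h3
      exact ℒ.mono ∅ {Fm.var 0} γ (Set.empty_subset _) h3
  obtain ⟨ψ, hψΔ, ⟨n, hn⟩⟩ := hex
  refine ⟨Fm.subst1 1 (Fm.var 0) ψ, hthm ψ hψΔ, ?_, ?_, ?_⟩
  · rw [Fm.subst1]
    apply mem_vars_subst.2
    refine ⟨n, hn, ?_⟩
    have h01 := hvars ψ hψΔ hn
    rcases h01 with h | h
    · subst h; simp [Fm.vars]
    · rw [Set.mem_singleton_iff] at h; subst h; simp [Fm.vars]
  · rw [Fm.subst1]
    intro k hk
    rcases mem_vars_subst.1 hk with ⟨m, hm, hmem⟩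
    by_cases hm1 : m = 1
    · simp only [hm1, if_pos rfl, ↓reduceIte, Fm.vars, Set.mem_singleton_iff] at hmem
      simp [hmem]
    · simp only [if_neg hm1, Fm.vars, Set.mem_singleton_iff] at hmem
      subst hmem
      have h01 := hvars ψ hψΔ hm
      rcases h01 with h | h
      · simp [h]
      · rw [Set.mem_singleton_iff] at h; exact absurd h hm1
  · intro m hm
    -- then the theorem is a variable, contradiction with nontriviality
    exfalso
    have hth : ℒ.deriv ∅ (Fm.var m) := by rw [← hm]; exact hthm ψ hψΔ
    have := ℒ.substInv (fun _ => Fm.var 1) ∅ (Fm.var m) hth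
    rw [Set.image_empty] at this
    have h1 : (Fm.var m : Fm L).subst (fun _ => Fm.var 1) = Fm.var 1 := rfl
    rw [h1] at this
    exact hnt (ℒ.mono ∅ {Fm.var 0} _ (Set.empty_subset _) this)

/-- A nontrivial protoalgebraic logic has a connective of arity at least 2. -/
lemma exists_binary_op (hnt : NontrivialLogic ℒ) (hproto : Protoalgebraic ℒ) :
    ∃ f : L.Op, 2 ≤ L.ar f := by
  by_contra hno
  push_neg at hno
  have hU : ∀ t : Fm L, ∃ m, t.vars ⊆ ({m} : Set ℕ) := by
    intro t
    induction t with
    | var n => exact ⟨n, by simp [Fm.vars]⟩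
    | op g as ih =>
      by_cases h : L.ar g = 0
      · refine ⟨0, ?_⟩
        intro k hk
        simp only [Fm.vars, Set.mem_iUnion] at hk
        rcases hk with ⟨i, _⟩
        exact absurd i.isLt (by omega)
      · have h1 : L.ar g = 1 := by have := hno g; omega
        have i0 : Fin (L.ar g) := ⟨0, by omega⟩
        obtain ⟨m, hm⟩ := ih i0
        refine ⟨m, ?_⟩
        intro k hk
        simp only [Fm.vars, Set.mem_iUnion] at hk
        rcases hk with ⟨i, hi⟩
        have : i = i0 := by
          apply Fin.ext
          have := i.isLt
          have := i0.isLt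
          omega
        exact hm (this ▸ hi)
  apply hnt
  obtain ⟨Δ, hvars, hthm, hmp⟩ := hproto
  refine ℒ.cut ({Fm.var 0} ∪ Δ) {Fm.var 0} (Fm.var 1) hmp ?_
  rintro γ (hγ | hγ)
  · rw [Set.mem_singleton_iff] at hγ; subst hγ; exact ℒ.axm _ _ rfl
  · refine ℒ.mono ∅ {Fm.var 0} γ (Set.empty_subset _) ?_
    have hψ := hthm γ hγ
    by_cases h1 : (1:ℕ) ∈ γ.vars
    · obtain ⟨m, hm⟩ := hU γ
      have hm1 : m = 1 := by have := hm h1; simp at this; omega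
      subst hm1
      have hback : (Fm.subst1 1 (Fm.var 0) γ).subst (fun n => if n = 0 then Fm.var 1 else Fm.var n) = γ := by
        rw [Fm.subst1, subst_subst]
        calc γ.subst _ = γ.subst (fun n => Fm.var n) := by
              apply subst_congr
              intro k hk
              have hk1 : k = 1 := by have := hm hk; simpa using this
              subst hk1
              simp [Fm.subst]
          _ = γ := subst_id γ
      have := ℒ.substInv (fun n => if n = 0 then Fm.var 1 else Fm.var n) ∅ _ hψ
      rw [Set.image_empty, hback] at this
      exact this
    · rw [subst1_not_mem h1] at hψ
      exact hψ

/-- Evaluation of a single-variable substitution. -/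
lemma eval_subst1 (A : Alg L) (w : ℕ → A.carrier) (u : ℕ) (X t : Fm L) :
    (Fm.subst1 u X t).eval A w = t.eval A (fun n => if n = u then X.eval A w else w n) := by
  rw [Fm.subst1, eval_subst]
  congr 1
  funext n
  by_cases h : n = u <;> simp [h, Fm.eval]

/-- Necessity: an algebraic semantics yields two distinct logically equivalent formulas. -/
lemma necessity (hnt : NontrivialLogic ℒ) (hproto : Protoalgebraic ℒ)
    (hsem : HasAlgSem ℒ) : ∃ ε δ : Fm L, ε ≠ δ ∧ LogEquiv ℒ ε δ := by
  obtain ⟨τ, K, huni, hiff⟩ := hsem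
  obtain ⟨t₀, hthm, h0, hsub, hop⟩ := exists_unary_theorem hnt hproto
  have hpair : ∃ p : Fm L × Fm L, p ∈ τ ∧ p.1 ≠ p.2 := by
    by_contra hno
    push_neg at hno
    apply hnt
    apply (hiff {Fm.var 0} (Fm.var 1)).2
    intro e he
    rcases he with ⟨p, hp, rfl⟩
    intro A hA v hhyp
    simp only
    rw [hno p hp]
  obtain ⟨p, hpτ, hpne⟩ := hpair
  set ε := Fm.subst1 0 t₀ p.1 with hε
  set δ := Fm.subst1 0 t₀ p.2 with hδ
  have hune := huni p hpτ
  refine ⟨ε, δ, ?_, ?_⟩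
  · intro heq
    exact hpne (subst1_injective_unary h0 hop p.1 hune.1 p.2 hune.2 heq)
  · have thmfact : ∀ A ∈ K, ∀ w : ℕ → A.carrier, ε.eval A w = δ.eval A w := by
      intro A hA w
      have h1 := (hiff ∅ t₀).1 hthm
      have he : (ε, δ) ∈ tauApp τ t₀ := ⟨p, hpτ, rfl⟩
      refine h1 _ he A hA w ?_
      intro q hq
      exfalso
      simp [tauAppSet] at hq
    have keyeval : ∀ A ∈ K, ∀ w : ℕ → A.carrier, ∀ (φ : Fm L) (v : ℕ),
        (Fm.subst1 v ε φ).eval A w = (Fm.subst1 v δ φ).eval A w := by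
      intro A hA w φ v
      have hval : (fun n => if n = v then ε.eval A w else w n)
          = (fun n => if n = v then δ.eval A w else w n) := by
        funext n
        by_cases h : n = v
        · simp only [if_pos h]
          exact thmfact A hA w
        · simp [h]
      rw [eval_subst1 A w v ε φ, eval_subst1 A w v δ φ, hval]
    have main : ∀ X Y : Fm L, (∀ A ∈ K, ∀ w, X.eval A w = Y.eval A w) → ℒ.deriv {X} Y := by
      intro X Y hXY
      apply (hiff {X} Y).2
      intro e he
      rcases he with ⟨q, hq, rfl⟩
      intro A hA w hhyp
      have hXYw := hXY A hA w
      have hmem : ((fun e : Fm L × Fm L => (Fm.subst1 0 X e.1, Fm.subst1 0 X e.2)) q)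
          ∈ tauAppSet τ {X} := by
        refine Set.mem_biUnion rfl ?_
        exact ⟨q, hq, rfl⟩
      have hLHS := hhyp _ hmem
      simp only at hLHS ⊢
      rw [eval_subst1 A w 0 X q.1, eval_subst1 A w 0 X q.2] at hLHS
      rw [eval_subst1 A w 0 Y q.1, eval_subst1 A w 0 Y q.2]
      have hval : (fun n => if n = 0 then Y.eval A w else w n)
          = (fun n => if n = 0 then X.eval A w else w n) := by
        funext n
        rw [hXYw]
      rw [hval]
      exact hLHS
    intro φ v
    exact ⟨main _ _ (fun A hA w => keyeval A hA w φ v),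
      main _ _ (fun A hA w => (keyeval A hA w φ v).symm)⟩

end FmAux
namespace FmAux

variable {L : Sig} {ℒ : Logic L}

lemma vars_subst_zero (σ : ℕ → Fm L) (h : ∀ n, (σ n).vars ⊆ ({0} : Set ℕ)) (t : Fm L) :
    (t.subst σ).vars ⊆ ({0} : Set ℕ) := by
  intro k hk
  rcases mem_vars_subst.1 hk with ⟨n, _, hmem⟩
  exact h n hmem

lemma lemB (t : Fm L) (ht : ∀ n, t ≠ .var n) : ∀ (ε δ : Fm L),
    ε.subst (fun _ => .var 0) = δ.subst (fun _ => .var 0) → ε ≠ δ →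
    ∃ m, ε.subst (fun n => if n = m then t else .var 0) ≠
      δ.subst (fun n => if n = m then t else .var 0)
  | .var a, .var b, hσ, hne => by
      have hab : a ≠ b := fun h => hne (by rw [h])
      refine ⟨a, ?_⟩
      have hba : b ≠ a := fun h => hab h.symm
      simp only [Fm.subst, if_pos rfl, if_neg hba]
      exact ht 0
  | .var a, .op g bs, hσ, hne => by
      exact absurd hσ (by simp [Fm.subst])
  | .op f as, .var b, hσ, hne => by
      exact absurd hσ (by simp [Fm.subst])
  | .op f as, .op g bs, hσ, hne => by
      have hd1 : (Fm.op f as).subst (fun _ => .var 0) =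
          .op f (fun i => (as i).subst (fun _ => .var 0)) := rfl
      have hd2 : (Fm.op g bs).subst (fun _ => .var 0) =
          .op g (fun i => (bs i).subst (fun _ => .var 0)) := rfl
      rw [hd1, hd2] at hσ
      injection hσ with h1 h2
      subst h1
      have h2' := eq_of_heq h2
      have hex : ∃ i, as i ≠ bs i := by
        by_contra hno
        push_neg at hno
        exact hne (by rw [funext hno])
      obtain ⟨i, hi⟩ := hex
      obtain ⟨m, hm⟩ := lemB t ht (as i) (bs i) (congrFun h2' i) hi
      refine ⟨m, ?_⟩
      intro heq
      have hd3 : (Fm.op f as).subst (fun n => if n = m then t else .var 0) =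
          .op f (fun i => (as i).subst (fun n => if n = m then t else .var 0)) := rfl
      have hd4 : (Fm.op f bs).subst (fun n => if n = m then t else .var 0) =
          .op f (fun i => (bs i).subst (fun n => if n = m then t else .var 0)) := rfl
      rw [hd3, hd4] at heq
      injection heq with _ h4
      exact hm (congrFun h4 i)

/-- From two distinct logically equivalent formulas, extract two distinct logically
equivalent unary formulas. -/
lemma exists_unary_pair (hnt : NontrivialLogic ℒ)
    (h : ∃ ε δ : Fm L, ε ≠ δ ∧ LogEquiv ℒ ε δ) :
    ∃ ε₀ δ₀ : Fm L, ε₀ ≠ δ₀ ∧ ε₀.vars ⊆ ({0} : Set ℕ) ∧ δ₀.vars ⊆ ({0} : Set ℕ) ∧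
      LogEquiv ℒ ε₀ δ₀ := by
  obtain ⟨ε, δ, hne, heqv⟩ := h
  by_cases hcase : ε.subst (fun _ => .var 0) = δ.subst (fun _ => .var 0)
  · -- collapsed images coincide
    cases hε : ε with
    | var a =>
      exfalso
      -- then δ is also a variable, and the logic is trivial
      cases hδ : δ with
      | var b =>
        have hab : a ≠ b := fun hh => hne (by rw [hε, hδ, hh])
        have hd : ℒ.deriv {Fm.var a} (Fm.var b) := by
          have := logEquiv_deriv_single heqv
          rwa [hε, hδ] at this
        set σ : ℕ → Fm L := fun n => if n = a then .var 0 else .var 1 with hσdef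
        have := ℒ.substInv σ _ _ hd
        rw [Set.image_singleton] at this
        have e1 : (Fm.var a : Fm L).subst σ = Fm.var 0 := by simp [hσdef, Fm.subst]
        have e2 : (Fm.var b : Fm L).subst σ = Fm.var 1 := by
          have : b ≠ a := fun hh => hab hh.symm
          simp [hσdef, Fm.subst, this]
        rw [e1, e2] at this
        exact hnt this
      | op g bs =>
        rw [hε, hδ] at hcase
        exact absurd hcase (by simp [Fm.subst])
    | op f as =>
      set t : Fm L := ε.subst (fun _ => .var 0) with htdef
      have ht : ∀ n, t ≠ .var n := by
        intro n
        rw [htdef, hε]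
        exact fun h => by simp [Fm.subst] at h
      obtain ⟨m, hm⟩ := lemB t ht ε δ hcase hne
      refine ⟨ε.subst (fun n => if n = m then t else .var 0),
        δ.subst (fun n => if n = m then t else .var 0), hm, ?_, ?_, ?_⟩
      · apply vars_subst_zero
        intro n
        by_cases hn : n = m
        · simp only [if_pos hn]
          rw [htdef]
          apply vars_subst_zero
          intro k
          simp [Fm.vars]
        · simp [hn, Fm.vars]
      · apply vars_subst_zero
        intro n
        by_cases hn : n = m
        · simp only [if_pos hn]
          rw [htdef]
          apply vars_subst_zero
          intro k
          simp [Fm.vars]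
        · simp [hn, Fm.vars]
      · exact logEquiv_subst heqv _
  · refine ⟨ε.subst (fun _ => .var 0), δ.subst (fun _ => .var 0), hcase, ?_, ?_, ?_⟩
    · apply vars_subst_zero; intro n; simp [Fm.vars]
    · apply vars_subst_zero; intro n; simp [Fm.vars]
    · exact logEquiv_subst heqv _

end FmAux
namespace FmAux

open scoped Classical

variable {L : Sig}

/-- Fuel-indexed normalization: rewrite instances `P(c)` (for `c ∈ T` normal) to `Q(c)`,
bottom-up. -/
noncomputable def Nf (P Q : Fm L) (T : Set (Fm L)) : ℕ → Fm L → Fm L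
  | 0, t => t
  | (k+1), .var n => .var n
  | (k+1), .op g as =>
    if h : ∃ c, Fm.op g (fun i => Nf P Q T k (as i)) = Fm.subst1 0 c P ∧ c ∈ T ∧
        Nf P Q T k c = c
    then Fm.subst1 0 h.choose Q
    else Fm.op g (fun i => Nf P Q T k (as i))

section NfLemmas

variable (P Q : Fm L) (T : Set (Fm L))
variable (hPvar : 0 ∈ P.vars) (hPnv : ∀ n, P ≠ .var n)
variable (hszPQ : ∀ c, fsize (Fm.subst1 0 c Q) = fsize (Fm.subst1 0 c P))
variable (hPinj : ∀ c c', Fm.subst1 0 c P = Fm.subst1 0 c' P → c = c')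

include hPvar hPnv in
lemma arg_size_lt {c u : Fm L} (hu : u = Fm.subst1 0 c P) : fsize c < fsize u := by
  have hk : 1 ≤ cnt0 P := cnt0_pos_iff.2 hPvar
  have h2 : 2 ≤ fsize P := two_le_fsize_of_var_mem hPvar hPnv
  have hadd := fsize_subst1 c P
  rw [← hu] at hadd
  have h1c := one_le_fsize c
  have h4 : cnt0 P + fsize c ≤ cnt0 P * fsize c + 1 := by nlinarith
  omega

include hszPQ in
lemma Nf_size : ∀ (k : ℕ) (t : Fm L), fsize (Nf P Q T k t) = fsize t := by
  intro k
  induction k with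
  | zero => intro t; rfl
  | succ k ih =>
    intro t
    cases t with
    | var n => rfl
    | op g as =>
      rw [Nf]
      split
      · next h =>
        have hspec := h.choose_spec
        rw [hszPQ, ← hspec.1]
        simp only [fsize]
        congr 1
        exact Finset.sum_congr rfl fun i _ => ih (as i)
      · simp only [fsize]
        congr 1
        exact Finset.sum_congr rfl fun i _ => ih (as i)

include hPvar hPnv hszPQ hPinj in
lemma Nf_stab : ∀ (k : ℕ) (t : Fm L), fsize t ≤ k →
    Nf P Q T (k+1) t = Nf P Q T k t := by
  intro k
  induction k using Nat.strong_induction_on with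
  | _ k ih =>
    intro t ht
    cases t with
    | var n =>
      cases k with
      | zero => simp [fsize] at ht
      | succ k => rfl
    | op g as =>
      cases k with
      | zero => exact absurd ht (by have := one_le_fsize (Fm.op g as); omega)
      | succ k =>
        have hch : ∀ i, Nf P Q T (k+1) (as i) = Nf P Q T k (as i) := by
          intro i
          apply ih k (Nat.lt_succ_self k)
          have h1 : fsize (as i) ≤ ∑ j, fsize (as j) :=
            Finset.single_le_sum (f := fun j => fsize (as j)) (fun j _ => Nat.zero_le _)
              (Finset.mem_univ i)
          simp only [fsize] at ht
          omega
      -- the candidate heads coincide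
        have hu : (Fm.op g fun i => Nf P Q T (k+1) (as i)) =
            (Fm.op g fun i => Nf P Q T k (as i)) := by
          congr 1; funext i; exact hch i
        have husz : fsize (Fm.op g fun i => Nf P Q T k (as i)) = fsize (Fm.op g as) := by
          simp only [fsize]
          congr 1
          exact Finset.sum_congr rfl fun i _ => Nf_size P Q T hszPQ k (as i)
        have hcond : ∀ c, ((Fm.op g fun i => Nf P Q T k (as i)) = Fm.subst1 0 c P) →
            (Nf P Q T (k+1) c = c ↔ Nf P Q T k c = c) := by
          intro c hc
          have hlt : fsize c < fsize (Fm.op g as) := by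
            rw [← husz]; exact arg_size_lt P hPvar hPnv hc
          have hcle : fsize c ≤ k := by omega
          rw [ih k (Nat.lt_succ_self k) c hcle]
        rw [Nf, Nf]
        have hC : (∃ c, (Fm.op g fun i => Nf P Q T (k+1) (as i)) = Fm.subst1 0 c P ∧ c ∈ T ∧
            Nf P Q T (k+1) c = c) ↔ (∃ c, (Fm.op g fun i => Nf P Q T k (as i)) = Fm.subst1 0 c P ∧
            c ∈ T ∧ Nf P Q T k c = c) := by
          rw [hu]
          constructor
          · rintro ⟨c, h1, h2, h3⟩
            exact ⟨c, h1, h2, (hcond c h1).1 h3⟩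
          · rintro ⟨c, h1, h2, h3⟩
            exact ⟨c, h1, h2, (hcond c h1).2 h3⟩
        by_cases hC1 : ∃ c, (Fm.op g fun i => Nf P Q T (k+1) (as i)) = Fm.subst1 0 c P ∧ c ∈ T ∧
            Nf P Q T (k+1) c = c
        · have hC2 := hC.1 hC1
          rw [dif_pos hC1, dif_pos hC2]
          congr 1
          apply hPinj
          rw [← hC1.choose_spec.1, ← hC2.choose_spec.1, hu]
        · have hC2 : ¬ _ := fun h => hC1 (hC.2 h)
          rw [dif_neg hC1, dif_neg hC2, hu]

/-- The normalization function. -/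
noncomputable def NN (t : Fm L) : Fm L := Nf P Q T (fsize t) t

include hPvar hPnv hszPQ hPinj in
lemma Nf_ge (t : Fm L) : ∀ (k : ℕ), fsize t ≤ k → Nf P Q T k t = NN P Q T t := by
  intro k
  induction k with
  | zero => intro h; have := one_le_fsize t; omega
  | succ k ih =>
    intro h
    by_cases hk : fsize t ≤ k
    · rw [Nf_stab P Q T hPvar hPnv hszPQ hPinj k t hk, ih hk]
    · have h1 : fsize t = k + 1 := by omega
      rw [NN, h1]

include hszPQ in
lemma NN_size (t : Fm L) : fsize (NN P Q T t) = fsize t :=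
  Nf_size P Q T hszPQ _ t

lemma NN_var (n : ℕ) : NN P Q T (.var n) = .var n := by
  rw [NN]
  simp [fsize]
  rfl

include hPvar hPnv hszPQ hPinj in
lemma NN_op_eq (g : L.Op) (as : Fin (L.ar g) → Fm L) :
    NN P Q T (.op g as) = (if h : ∃ c, Fm.op g (fun i => NN P Q T (as i)) = Fm.subst1 0 c P ∧
        c ∈ T ∧ NN P Q T c = c
      then Fm.subst1 0 h.choose Q
      else Fm.op g (fun i => NN P Q T (as i))) := by
  have hS : fsize (Fm.op g as) = (∑ j, fsize (as j)) + 1 := by simp [fsize]; omega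
  rw [NN, hS, Nf]
  set S := ∑ j, fsize (as j) with hSdef
  have hch : ∀ i, Nf P Q T S (as i) = NN P Q T (as i) := by
    intro i
    apply Nf_ge P Q T hPvar hPnv hszPQ hPinj
    exact Finset.single_le_sum (f := fun j => fsize (as j)) (fun j _ => Nat.zero_le _)
      (Finset.mem_univ i)
  have hu : (Fm.op g fun i => Nf P Q T S (as i)) = (Fm.op g fun i => NN P Q T (as i)) := by
    congr 1; funext i; exact hch i
  have husz : fsize (Fm.op g fun i => Nf P Q T S (as i)) = fsize (Fm.op g as) := by
    simp only [fsize]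
    congr 1
    exact Finset.sum_congr rfl fun i _ => Nf_size P Q T hszPQ S (as i)
  have hcond : ∀ c, ((Fm.op g fun i => Nf P Q T S (as i)) = Fm.subst1 0 c P) →
      (Nf P Q T S c = c ↔ NN P Q T c = c) := by
    intro c hc
    have hlt : fsize c < fsize (Fm.op g as) := by
      rw [← husz]; exact arg_size_lt P hPvar hPnv hc
    have hcle : fsize c ≤ S := by rw [hS] at hlt; omega
    rw [Nf_ge P Q T hPvar hPnv hszPQ hPinj c S hcle]
  have hC : (∃ c, (Fm.op g fun i => Nf P Q T S (as i)) = Fm.subst1 0 c P ∧ c ∈ T ∧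
      Nf P Q T S c = c) ↔ (∃ c, (Fm.op g fun i => NN P Q T (as i)) = Fm.subst1 0 c P ∧
      c ∈ T ∧ NN P Q T c = c) := by
    rw [hu]
    constructor
    · rintro ⟨c, h1, h2, h3⟩
      exact ⟨c, h1, h2, (hcond c (hu ▸ h1)).1 h3⟩
    · rintro ⟨c, h1, h2, h3⟩
      exact ⟨c, h1, h2, (hcond c (hu ▸ h1)).2 h3⟩
  by_cases hC1 : ∃ c, (Fm.op g fun i => Nf P Q T S (as i)) = Fm.subst1 0 c P ∧ c ∈ T ∧
      Nf P Q T S c = c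
  · have hC2 := hC.1 hC1
    rw [dif_pos hC1, dif_pos hC2]
    congr 1
    apply hPinj
    rw [← hC1.choose_spec.1, ← hC2.choose_spec.1, hu]
  · have hC2 : ¬ _ := fun h => hC1 (hC.2 h)
    rw [dif_neg hC1, dif_neg hC2, hu]

include hPvar hPnv hszPQ hPinj in
lemma NN_op_fire {g : L.Op} {as : Fin (L.ar g) → Fm L} {c : Fm L}
    (hc : Fm.op g (fun i => NN P Q T (as i)) = Fm.subst1 0 c P)
    (hcT : c ∈ T) (hcN : NN P Q T c = c) :
    NN P Q T (.op g as) = Fm.subst1 0 c Q := by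
  rw [NN_op_eq P Q T hPvar hPnv hszPQ hPinj]
  have hC : ∃ c', Fm.op g (fun i => NN P Q T (as i)) = Fm.subst1 0 c' P ∧ c' ∈ T ∧
      NN P Q T c' = c' := ⟨c, hc, hcT, hcN⟩
  rw [dif_pos hC]
  congr 1
  apply hPinj
  rw [← hC.choose_spec.1, hc]

include hPvar hPnv hszPQ hPinj in
lemma NN_op_nofire {g : L.Op} {as : Fin (L.ar g) → Fm L}
    (h : ∀ c, Fm.op g (fun i => NN P Q T (as i)) = Fm.subst1 0 c P → c ∈ T →
      NN P Q T c = c → False) :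
    NN P Q T (.op g as) = Fm.op g (fun i => NN P Q T (as i)) := by
  rw [NN_op_eq P Q T hPvar hPnv hszPQ hPinj]
  rw [dif_neg]
  rintro ⟨c, h1, h2, h3⟩
  exact h c h1 h2 h3

end NfLemmas

end FmAux
namespace FmAux

variable {L : Sig}

lemma subst1_comp (b a : Fm L) (X : Fm L) :
    Fm.subst1 0 b (Fm.subst1 0 a X) = Fm.subst1 0 (Fm.subst1 0 b a) X := by
  rw [Fm.subst1, Fm.subst1, subst_subst]
  congr 1
  funext n
  by_cases h : n = 0
  · simp [h, Fm.subst1]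
  · simp [h, Fm.subst1, Fm.subst]

lemma subst1_zero_var (X : Fm L) : Fm.subst1 0 (.var 0) X = X := by
  rw [Fm.subst1]
  calc X.subst _ = X.subst (fun n => .var n) := by
        apply subst_congr
        intro n _
        by_cases h : n = 0 <;> simp [h]
    _ = X := subst_id X

/-- The subterm relation. -/
inductive Sub : Fm L → Fm L → Prop
  | refl (t) : Sub t t
  | step {s : Fm L} {g : L.Op} {as : Fin (L.ar g) → Fm L} (i : Fin (L.ar g)) :
      Sub s (as i) → Sub s (.op g as)

lemma Sub.trans {a b c : Fm L} (hab : Sub a b) (hbc : Sub b c) : Sub a c := by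
  induction hbc with
  | refl => exact hab
  | step i h ih => exact Sub.step i ih

lemma Sub.fsize_le {s t : Fm L} (h : Sub s t) : fsize s ≤ fsize t := by
  induction h with
  | refl => exact le_refl _
  | @step g as i h ih =>
    refine le_trans ih ?_
    have h1 : fsize (as i) ≤ ∑ j, fsize (as j) :=
      Finset.single_le_sum (f := fun j => fsize (as j)) (fun j _ => Nat.zero_le _)
        (Finset.mem_univ i)
    simp only [fsize]
    omega

lemma Sub.cnt0_le {s t : Fm L} (h : Sub s t) : cnt0 s ≤ cnt0 t := by
  induction h with
  | refl => exact le_refl _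
  | @step g as i h ih =>
    refine le_trans ih ?_
    have h1 : cnt0 (as i) ≤ ∑ j, cnt0 (as j) :=
      Finset.single_le_sum (f := fun j => cnt0 (as j)) (fun j _ => Nat.zero_le _)
        (Finset.mem_univ i)
    simp only [cnt0]
    omega

lemma Sub.vars_subset {s t : Fm L} (h : Sub s t) : s.vars ⊆ t.vars := by
  induction h with
  | refl => exact le_refl _
  | step i h ih =>
    refine subset_trans ih ?_
    intro k hk
    exact Set.mem_iUnion.2 ⟨i, hk⟩

section Tri

variable (f : L.Op)

/-- The basic "triple" constructor: first slot `p`, second `q`, remaining slots `r`. -/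
def tri (p q r : Fm L) : Fm L :=
  .op f (fun i => if i.val = 0 then p else if i.val = 1 then q else r)

variable (hf : 2 ≤ L.ar f)

include hf in
lemma sum_slots (a b c : ℕ) :
    (∑ i : Fin (L.ar f), if i.val = 0 then a else if i.val = 1 then b else c) =
      a + b + (L.ar f - 2) * c := by
  classical
  set i0 : Fin (L.ar f) := ⟨0, by omega⟩ with hi0
  set i1 : Fin (L.ar f) := ⟨1, by omega⟩ with hi1
  set F : Fin (L.ar f) → ℕ := fun i => if i.val = 0 then a else if i.val = 1 then b else c
    with hF
  have h01 : i1 ≠ i0 := by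
    intro h
    have := congrArg Fin.val h
    simp [hi0, hi1] at this
  have e1 : ∑ i, F i = F i0 + ∑ i ∈ Finset.univ.erase i0, F i :=
    (Finset.add_sum_erase _ F (Finset.mem_univ i0)).symm
  have hmem1 : i1 ∈ Finset.univ.erase i0 := Finset.mem_erase.2 ⟨h01, Finset.mem_univ _⟩
  have e2 : ∑ i ∈ Finset.univ.erase i0, F i =
      F i1 + ∑ i ∈ (Finset.univ.erase i0).erase i1, F i :=
    (Finset.add_sum_erase _ F hmem1).symm
  have e3 : ∑ i ∈ (Finset.univ.erase i0).erase i1, F i =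
      ((Finset.univ.erase i0).erase i1).card * c := by
    rw [Finset.sum_congr rfl (fun i hi => ?_), Finset.sum_const, smul_eq_mul]
    rcases Finset.mem_erase.1 hi with ⟨hne1, hi'⟩
    rcases Finset.mem_erase.1 hi' with ⟨hne0, _⟩
    have hv0 : i.val ≠ 0 := fun h => hne0 (Fin.ext (by simp [hi0, h]))
    have hv1 : i.val ≠ 1 := fun h => hne1 (Fin.ext (by simp [hi1, h]))
    simp [hF, hv0, hv1]
  have hcard : ((Finset.univ.erase i0).erase i1).card = L.ar f - 2 := by
    rw [Finset.card_erase_of_mem hmem1, Finset.card_erase_of_mem (Finset.mem_univ i0)]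
    simp only [Finset.card_univ, Fintype.card_fin]
    omega
  have hFi0 : F i0 = a := by simp [hF, hi0]
  have hFi1 : F i1 = b := by simp [hF, hi1]
  rw [e1, e2, e3, hcard, hFi0, hFi1]
  ring

include hf in
lemma tri_fsize (p q r : Fm L) :
    fsize (tri f p q r) = 1 + (fsize p + fsize q + (L.ar f - 2) * fsize r) := by
  show 1 + _ = _
  congr 1
  rw [← sum_slots f hf (fsize p) (fsize q) (fsize r)]
  apply Finset.sum_congr rfl
  intro i _
  by_cases h0 : i.val = 0
  · simp [h0]
  · by_cases h1 : i.val = 1 <;> simp [h0, h1]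

include hf in
lemma tri_cnt0 (p q r : Fm L) :
    cnt0 (tri f p q r) = cnt0 p + cnt0 q + (L.ar f - 2) * cnt0 r := by
  show (∑ i, _) = _
  rw [← sum_slots f hf (cnt0 p) (cnt0 q) (cnt0 r)]
  apply Finset.sum_congr rfl
  intro i _
  by_cases h0 : i.val = 0
  · simp [h0]
  · by_cases h1 : i.val = 1 <;> simp [h0, h1]

lemma tri_subst (σ : ℕ → Fm L) (p q r : Fm L) :
    (tri f p q r).subst σ = tri f (p.subst σ) (q.subst σ) (r.subst σ) := by
  show Fm.op f _ = Fm.op f _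
  congr 1
  funext i
  by_cases h0 : i.val = 0
  · simp [h0]
  · by_cases h1 : i.val = 1 <;> simp [h0, h1]

include hf in
lemma tri_inj {p q r p' q' r' : Fm L} (h : tri f p q r = tri f p' q' r') :
    p = p' ∧ q = q' := by
  have h' : (fun i : Fin (L.ar f) => if i.val = 0 then p else if i.val = 1 then q else r) =
      (fun i : Fin (L.ar f) => if i.val = 0 then p' else if i.val = 1 then q' else r') := by
    injection h with _ h2
  constructor
  · have := congrFun h' ⟨0, by omega⟩
    simpa using this
  · have := congrFun h' ⟨1, by omega⟩
    simpa using this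

include hf in
lemma tri_vars {p q r : Fm L} (hp : p.vars ⊆ ({0} : Set ℕ)) (hq : q.vars ⊆ ({0} : Set ℕ))
    (hr : r.vars ⊆ ({0} : Set ℕ)) : (tri f p q r).vars ⊆ ({0} : Set ℕ) := by
  intro k hk
  simp only [tri, Fm.vars, Set.mem_iUnion] at hk
  rcases hk with ⟨i, hi⟩
  by_cases h0 : i.val = 0
  · rw [if_pos h0] at hi; exact hp hi
  · by_cases h1 : i.val = 1
    · rw [if_neg h0, if_pos h1] at hi; exact hq hi
    · rw [if_neg h0, if_neg h1] at hi; exact hr hi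

include hf in
lemma tri_mem_vars {p q r : Fm L} (hp : 0 ∈ p.vars) : 0 ∈ (tri f p q r).vars := by
  simp only [tri, Fm.vars, Set.mem_iUnion]
  refine ⟨⟨0, by omega⟩, ?_⟩
  simpa using hp

lemma tri_ne_var (p q r : Fm L) (n : ℕ) : tri f p q r ≠ .var n :=
  fun h => by cases h

include hf in
lemma tri_sub_p (p q r : Fm L) : Sub p (tri f p q r) := by
  refine Sub.step (⟨0, by omega⟩ : Fin (L.ar f)) ?_
  simpa using Sub.refl p

include hf in
lemma tri_sub_q (p q r : Fm L) : Sub q (tri f p q r) := by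
  refine Sub.step (⟨1, by omega⟩ : Fin (L.ar f)) ?_
  simpa using Sub.refl q

/-- Full towers of `f` over variable 0. -/
def Tow : ℕ → Fm L
  | 0 => .var 0
  | (j+1) => .op f (fun _ => Tow j)

lemma Tow_vars : ∀ j, (Tow f j).vars ⊆ ({0} : Set ℕ)
  | 0 => by simp [Tow, Fm.vars]
  | (j+1) => by
      intro k hk
      simp only [Tow, Fm.vars, Set.mem_iUnion] at hk
      rcases hk with ⟨i, hi⟩
      exact Tow_vars j hi

include hf in
lemma Tow_mem_vars : ∀ j, 0 ∈ (Tow f j).vars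
  | 0 => by simp [Tow, Fm.vars]
  | (j+1) => by
      simp only [Tow, Fm.vars, Set.mem_iUnion]
      exact ⟨⟨0, by omega⟩, Tow_mem_vars j⟩

lemma Tow_subst1 (c : Fm L) (j : ℕ) :
    Fm.subst1 0 c (Tow f (j+1)) = .op f (fun _ => Fm.subst1 0 c (Tow f j)) := rfl

include hf in
lemma Tow_size_ge (c : Fm L) : ∀ j, 2^j ≤ fsize (Fm.subst1 0 c (Tow f j))
  | 0 => by
      rw [Tow, subst1_var_self]
      simpa using one_le_fsize c
  | (j+1) => by
      rw [Tow_subst1]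
      have ih := Tow_size_ge c j
      have hsum : 2 * fsize (Fm.subst1 0 c (Tow f j)) ≤
          ∑ _i : Fin (L.ar f), fsize (Fm.subst1 0 c (Tow f j)) := by
        rw [Finset.sum_const, smul_eq_mul, Finset.card_univ, Fintype.card_fin]
        exact Nat.mul_le_mul_right _ hf
      simp only [fsize]
      calc 2^(j+1) = 2 * 2^j := by ring
        _ ≤ 2 * fsize (Fm.subst1 0 c (Tow f j)) := by omega
        _ ≤ _ := hsum
      |>.trans (by omega)

include hf in
lemma Tow_inst_inj : ∀ j {b c : Fm L},
    Fm.subst1 0 b (Tow f j) = Fm.subst1 0 c (Tow f j) → b = c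
  | 0, b, c, h => by rwa [Tow, subst1_var_self, subst1_var_self] at h
  | (j+1), b, c, h => by
      rw [Tow_subst1, Tow_subst1] at h
      injection h with _ h2
      exact Tow_inst_inj j (congrFun h2 ⟨0, by omega⟩)

end Tri

end FmAux
namespace FmAux

open scoped Classical

variable {L : Sig}

lemma eq_subst1_self {x : Fm L} {g : L.Op} {bs : Fin (L.ar g) → Fm L}
    (h : x = Fm.subst1 0 x (.op g bs)) : x = .op g bs := by
  by_cases hk : 0 ∈ (Fm.op g bs).vars
  · exfalso
    have hk1 : 1 ≤ cnt0 (Fm.op g bs) := cnt0_pos_iff.2 hk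
    have hb2 : 2 ≤ fsize (Fm.op g bs) := two_le_fsize_of_var_mem hk op_ne_var
    have hadd := fsize_subst1 x (Fm.op g bs)
    rw [← h] at hadd
    have h1x := one_le_fsize x
    have : cnt0 (Fm.op g bs) + fsize x ≤ cnt0 (Fm.op g bs) * fsize x + 1 := by nlinarith
    omega
  · rwa [subst1_not_mem hk] at h

/-- The set of "bad" arguments (where two distinct unary formulas collapse) is a
subsingleton. -/
lemma bad_pair_eq : ∀ (e0 : Fm L), e0.vars ⊆ ({0} : Set ℕ) →
    ∀ (d0 : Fm L), d0.vars ⊆ ({0} : Set ℕ) → e0 ≠ d0 →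
    ∀ a b, Fm.subst1 0 a e0 = Fm.subst1 0 a d0 → Fm.subst1 0 b e0 = Fm.subst1 0 b d0 → a = b
  | .var n, hen, .var m, hdm, hne, a, b, ha, hb => by
      have h1 : n = 0 := by simpa using hen (by simp [Fm.vars] : n ∈ (Fm.var n : Fm L).vars)
      have h2 : m = 0 := by simpa using hdm (by simp [Fm.vars] : m ∈ (Fm.var m : Fm L).vars)
      exact absurd (by rw [h1, h2]) hne
  | .var n, hen, .op g bs, hdm, hne, a, b, ha, hb => by
      have h1 : n = 0 := by simpa using hen (by simp [Fm.vars] : n ∈ (Fm.var n : Fm L).vars)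
      subst h1
      rw [subst1_var_self] at ha hb
      rw [eq_subst1_self ha, eq_subst1_self hb]
  | .op g bs, hen, .var m, hdm, hne, a, b, ha, hb => by
      have h1 : m = 0 := by simpa using hdm (by simp [Fm.vars] : m ∈ (Fm.var m : Fm L).vars)
      subst h1
      rw [subst1_var_self] at ha hb
      rw [eq_subst1_self ha.symm, eq_subst1_self hb.symm]
  | .op g as, hen, .op g' bs, hdm, hne, a, b, ha, hb => by
      have hda : Fm.subst1 0 a (Fm.op g as) = .op g (fun i => Fm.subst1 0 a (as i)) := rfl
      have hda' : Fm.subst1 0 a (Fm.op g' bs) = .op g' (fun i => Fm.subst1 0 a (bs i)) := rfl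
      have hdb : Fm.subst1 0 b (Fm.op g as) = .op g (fun i => Fm.subst1 0 b (as i)) := rfl
      have hdb' : Fm.subst1 0 b (Fm.op g' bs) = .op g' (fun i => Fm.subst1 0 b (bs i)) := rfl
      rw [hda, hda'] at ha
      rw [hdb, hdb'] at hb
      injection ha with hgg ha2
      subst hgg
      have ha2' := eq_of_heq ha2
      injection hb with _ hb2
      have hex : ∃ i, as i ≠ bs i := by
        by_contra hno
        push_neg at hno
        exact hne (by rw [funext hno])
      obtain ⟨i, hi⟩ := hex
      refine bad_pair_eq (as i) ?_ (bs i) ?_ hi a b (congrFun ha2' i) (congrFun hb2 i)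
      · exact fun k hk => hen (Set.mem_iUnion.2 ⟨i, hk⟩)
      · exact fun k hk => hdm (Set.mem_iUnion.2 ⟨i, hk⟩)

section Pattern

variable (f : L.Op) (e0 d0 : Fm L)

/-- The two "chunk blocks". -/
noncomputable def MMp : Fm L := tri f e0 d0 d0
noncomputable def MMq : Fm L := tri f d0 e0 d0
/-- The pattern bodies. -/
noncomputable def dl : Fm L := tri f (.var 0) (MMp f e0 d0) (MMp f e0 d0)
noncomputable def ep : Fm L := tri f (.var 0) (MMq f e0 d0) (MMp f e0 d0)
/-- Size of the bad witness, if any. -/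
noncomputable def wsz : ℕ :=
  if h : ∃ a : Fm L, Fm.subst1 0 a e0 = Fm.subst1 0 a d0 then fsize h.choose else 0
/-- The tower height. -/
noncomputable def mexp : ℕ := fsize (MMp f e0 d0) + max (fsize e0) (fsize d0) + wsz e0 d0
/-- The padding tower. -/
noncomputable def Bt : Fm L := Tow f (mexp f e0 d0)
/-- The final pattern pair, `δ̂` and `ε̂`. -/
noncomputable def dhat : Fm L := Fm.subst1 0 (Bt f e0 d0) (dl f e0 d0)
noncomputable def ehat : Fm L := Fm.subst1 0 (Bt f e0 d0) (ep f e0 d0)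

variable (hf : 2 ≤ L.ar f) (hne : e0 ≠ d0)
variable (he : e0.vars ⊆ ({0} : Set ℕ)) (hd : d0.vars ⊆ ({0} : Set ℕ))

include hne he hd in
lemma wsz_bound : ∀ a : Fm L, Fm.subst1 0 a e0 = Fm.subst1 0 a d0 → fsize a = wsz e0 d0 := by
  intro a ha
  have hex : ∃ a : Fm L, Fm.subst1 0 a e0 = Fm.subst1 0 a d0 := ⟨a, ha⟩
  rw [wsz, dif_pos hex]
  congr 1
  exact bad_pair_eq e0 he d0 hd hne a hex.choose ha hex.choose_spec

lemma mexp_gt_MMp : fsize (MMp f e0 d0) < 2 ^ mexp f e0 d0 := by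
  have h1 : mexp f e0 d0 < 2 ^ mexp f e0 d0 := Nat.lt_two_pow_self
  have h2 : fsize (MMp f e0 d0) ≤ mexp f e0 d0 := by rw [mexp]; omega
  omega

lemma mexp_gt_max : max (fsize e0) (fsize d0) < 2 ^ mexp f e0 d0 := by
  have h1 : mexp f e0 d0 < 2 ^ mexp f e0 d0 := Nat.lt_two_pow_self
  have h2 : max (fsize e0) (fsize d0) ≤ mexp f e0 d0 := by rw [mexp]; omega
  omega

lemma mexp_gt_wsz : wsz e0 d0 < 2 ^ mexp f e0 d0 := by
  have h1 : mexp f e0 d0 < 2 ^ mexp f e0 d0 := Nat.lt_two_pow_self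
  have h2 : wsz e0 d0 ≤ mexp f e0 d0 := by rw [mexp]; omega
  omega

include hf he hd in
lemma MMp_vars : (MMp f e0 d0).vars ⊆ ({0} : Set ℕ) := tri_vars f hf he hd hd

include hf he hd in
lemma MMq_vars : (MMq f e0 d0).vars ⊆ ({0} : Set ℕ) := tri_vars f hf hd he hd

include hf he in
lemma fsize_e0_lt_MMp : fsize e0 < fsize (MMp f e0 d0) := by
  rw [MMp, tri_fsize f hf]
  have := one_le_fsize d0
  omega

include hf hd in
lemma fsize_d0_lt_MMp : fsize d0 < fsize (MMp f e0 d0) := by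
  rw [MMp, tri_fsize f hf]
  have := one_le_fsize e0
  omega

include hf in
lemma cnt0_le_MMp : cnt0 e0 ≤ cnt0 (MMp f e0 d0) ∧ cnt0 d0 ≤ cnt0 (MMp f e0 d0) := by
  rw [MMp, tri_cnt0 f hf]
  omega

include hf in
lemma two_le_fsize_MMp : 2 ≤ fsize (MMp f e0 d0) := by
  rw [MMp, tri_fsize f hf]
  have := one_le_fsize e0
  omega

include hf in
lemma dhat_eq : dhat f e0 d0 = tri f (Bt f e0 d0)
    (Fm.subst1 0 (Bt f e0 d0) (MMp f e0 d0)) (Fm.subst1 0 (Bt f e0 d0) (MMp f e0 d0)) := by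
  rw [dhat, dl, Fm.subst1, tri_subst]
  simp [Fm.subst, Fm.subst1]

include hf in
lemma ehat_eq : ehat f e0 d0 = tri f (Bt f e0 d0)
    (Fm.subst1 0 (Bt f e0 d0) (MMq f e0 d0)) (Fm.subst1 0 (Bt f e0 d0) (MMp f e0 d0)) := by
  rw [ehat, ep, Fm.subst1, tri_subst]
  simp [Fm.subst, Fm.subst1]

include hf in
lemma dhat_inst (c : Fm L) : Fm.subst1 0 c (dhat f e0 d0) =
    tri f (Fm.subst1 0 c (Bt f e0 d0))
      (Fm.subst1 0 (Fm.subst1 0 c (Bt f e0 d0)) (MMp f e0 d0))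
      (Fm.subst1 0 (Fm.subst1 0 c (Bt f e0 d0)) (MMp f e0 d0)) := by
  rw [dhat_eq f e0 d0 hf, Fm.subst1, tri_subst]
  congr 1 <;> rw [← Fm.subst1, subst1_comp]

include hf in
lemma ehat_inst (c : Fm L) : Fm.subst1 0 c (ehat f e0 d0) =
    tri f (Fm.subst1 0 c (Bt f e0 d0))
      (Fm.subst1 0 (Fm.subst1 0 c (Bt f e0 d0)) (MMq f e0 d0))
      (Fm.subst1 0 (Fm.subst1 0 c (Bt f e0 d0)) (MMp f e0 d0)) := by
  rw [ehat_eq f e0 d0 hf, Fm.subst1, tri_subst]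
  congr 1 <;> rw [← Fm.subst1, subst1_comp]

include hf in
lemma dhat_var : 0 ∈ (dhat f e0 d0).vars := by
  rw [dhat_eq f e0 d0 hf]
  exact tri_mem_vars f hf (Tow_mem_vars f hf _)

include hf in
lemma dhat_nv : ∀ n, dhat f e0 d0 ≠ .var n := by
  rw [dhat_eq f e0 d0 hf]
  exact tri_ne_var f _ _ _

include hf in
lemma ehat_nv : ∀ n, ehat f e0 d0 ≠ .var n := by
  rw [ehat_eq f e0 d0 hf]
  exact tri_ne_var f _ _ _

include hf in
lemma dhat_inj : ∀ c c' : Fm L,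
    Fm.subst1 0 c (dhat f e0 d0) = Fm.subst1 0 c' (dhat f e0 d0) → c = c' := by
  intro c c' h
  rw [dhat_inst f e0 d0 hf, dhat_inst f e0 d0 hf] at h
  exact Tow_inst_inj f hf _ (tri_inj f hf h).1

include hf he hd in
lemma dhat_vars : (dhat f e0 d0).vars ⊆ ({0} : Set ℕ) := by
  rw [dhat_eq f e0 d0 hf]
  refine tri_vars f hf (Tow_vars f _) ?_ ?_ <;>
    · intro k hk
      rcases mem_vars_subst.1 hk with ⟨n, hn, hmem⟩
      have := MMp_vars f e0 d0 hf he hd hn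
      simp only [Set.mem_singleton_iff] at this
      subst this
      simp only [if_pos rfl] at hmem
      exact Tow_vars f _ hmem

include hf he hd in
lemma ehat_vars : (ehat f e0 d0).vars ⊆ ({0} : Set ℕ) := by
  rw [ehat_eq f e0 d0 hf]
  have hmm : ∀ X : Fm L, X.vars ⊆ ({0} : Set ℕ) →
      (Fm.subst1 0 (Bt f e0 d0) X).vars ⊆ ({0} : Set ℕ) := by
    intro X hX k hk
    rcases mem_vars_subst.1 hk with ⟨n, hn, hmem⟩
    have := hX hn
    simp only [Set.mem_singleton_iff] at this
    subst this
    simp only [if_pos rfl] at hmem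
    exact Tow_vars f _ hmem
  exact tri_vars f hf (Tow_vars f _) (hmm _ (MMq_vars f e0 d0 hf he hd))
    (hmm _ (MMp_vars f e0 d0 hf he hd))

include hf in
lemma hsz_ehat_dhat : ∀ c : Fm L,
    fsize (Fm.subst1 0 c (ehat f e0 d0)) = fsize (Fm.subst1 0 c (dhat f e0 d0)) := by
  have h1 : fsize (MMq f e0 d0) = fsize (MMp f e0 d0) := by
    rw [MMp, MMq, tri_fsize f hf, tri_fsize f hf]; omega
  have h2 : cnt0 (MMq f e0 d0) = cnt0 (MMp f e0 d0) := by
    rw [MMp, MMq, tri_cnt0 f hf, tri_cnt0 f hf]; omega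
  have h3 : fsize (Fm.subst1 0 (Bt f e0 d0) (MMq f e0 d0)) =
      fsize (Fm.subst1 0 (Bt f e0 d0) (MMp f e0 d0)) := by
    have a1 := fsize_subst1 (Bt f e0 d0) (MMq f e0 d0)
    have a2 := fsize_subst1 (Bt f e0 d0) (MMp f e0 d0)
    rw [h1, h2] at a1
    omega
  have h4 : cnt0 (Fm.subst1 0 (Bt f e0 d0) (MMq f e0 d0)) =
      cnt0 (Fm.subst1 0 (Bt f e0 d0) (MMp f e0 d0)) := by
    rw [cnt0_subst1, cnt0_subst1, h2]
  have h5 : fsize (ehat f e0 d0) = fsize (dhat f e0 d0) := by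
    rw [ehat_eq f e0 d0 hf, dhat_eq f e0 d0 hf, tri_fsize f hf, tri_fsize f hf, h3]
  have h6 : cnt0 (ehat f e0 d0) = cnt0 (dhat f e0 d0) := by
    rw [ehat_eq f e0 d0 hf, dhat_eq f e0 d0 hf, tri_cnt0 f hf, tri_cnt0 f hf, h4]
  intro c
  have a1 := fsize_subst1 c (ehat f e0 d0)
  have a2 := fsize_subst1 c (dhat f e0 d0)
  rw [h5, h6] at a1
  omega

include hf in
/-- The central arithmetic no-fire lemma. -/
lemma nf_main {s0 s1 b c : Fm L}
    (hs0 : fsize s0 ≤ max (fsize e0) (fsize d0))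
    (hs1 : fsize s1 < fsize (MMp f e0 d0))
    (hk1 : cnt0 s1 ≤ cnt0 (MMp f e0 d0))
    (h0 : Fm.subst1 0 b s0 = Fm.subst1 0 c (Bt f e0 d0))
    (h1 : Fm.subst1 0 b s1 = Fm.subst1 0 (Fm.subst1 0 c (Bt f e0 d0)) (MMp f e0 d0)) :
    False := by
  have hC : 2 ^ mexp f e0 d0 ≤ fsize (Fm.subst1 0 c (Bt f e0 d0)) :=
    Tow_size_ge f hf c _
  by_cases hk0 : cnt0 s0 = 0
  · have hz : (0:ℕ) ∉ s0.vars := by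
      intro hmem
      have := cnt0_pos_iff.2 hmem
      omega
    rw [subst1_not_mem hz] at h0
    have := mexp_gt_max f e0 d0
    have : fsize s0 = fsize (Fm.subst1 0 c (Bt f e0 d0)) := by rw [h0]
    omega
  · have hk0' : 1 ≤ cnt0 s0 := by omega
    have e1 := fsize_subst1 b s0
    rw [h0] at e1
    have e2 := fsize_subst1 b s1
    rw [h1] at e2
    have e3 := fsize_subst1 (Fm.subst1 0 c (Bt f e0 d0)) (MMp f e0 d0)
    have ha0 := one_le_fsize s0
    have hX := one_le_fsize b
    -- work over the integers
    have hident : ((fsize (MMp f e0 d0) : ℤ) - fsize s1) +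
        (cnt0 (MMp f e0 d0) : ℤ) * ((fsize s0 : ℤ) - 1) +
        ((cnt0 (MMp f e0 d0) : ℤ) * (cnt0 s0 : ℤ) - (cnt0 s1 : ℤ)) * ((fsize b : ℤ) - 1)
        = 0 := by
      have e1' : ((fsize (Fm.subst1 0 c (Bt f e0 d0)) : ℤ)) + (cnt0 s0 : ℤ) =
          (fsize s0 : ℤ) + (cnt0 s0 : ℤ) * (fsize b : ℤ) := by exact_mod_cast e1
      have e2' : ((fsize (Fm.subst1 0 (Fm.subst1 0 c (Bt f e0 d0)) (MMp f e0 d0)) : ℤ)) +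
          (cnt0 s1 : ℤ) = (fsize s1 : ℤ) + (cnt0 s1 : ℤ) * (fsize b : ℤ) := by
        exact_mod_cast e2
      have e3' : ((fsize (Fm.subst1 0 (Fm.subst1 0 c (Bt f e0 d0)) (MMp f e0 d0)) : ℤ)) +
          (cnt0 (MMp f e0 d0) : ℤ) = (fsize (MMp f e0 d0) : ℤ) +
          (cnt0 (MMp f e0 d0) : ℤ) * (fsize (Fm.subst1 0 c (Bt f e0 d0)) : ℤ) := by
        exact_mod_cast e3
      linear_combination (-(cnt0 (MMp f e0 d0) : ℤ)) * e1' + e2' - e3'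
    have t1 : (0:ℤ) < (fsize (MMp f e0 d0) : ℤ) - fsize s1 := by
      have : (fsize s1 : ℤ) < fsize (MMp f e0 d0) := by exact_mod_cast hs1
      omega
    have t2 : (0:ℤ) ≤ (cnt0 (MMp f e0 d0) : ℤ) * ((fsize s0 : ℤ) - 1) := by
      apply mul_nonneg
      · exact_mod_cast Nat.zero_le _
      · have : (1:ℤ) ≤ fsize s0 := by exact_mod_cast ha0
        omega
    have t3 : (0:ℤ) ≤ ((cnt0 (MMp f e0 d0) : ℤ) * (cnt0 s0 : ℤ) - (cnt0 s1 : ℤ)) *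
        ((fsize b : ℤ) - 1) := by
      apply mul_nonneg
      · have hle1 : (cnt0 s1 : ℤ) ≤ (cnt0 (MMp f e0 d0) : ℤ) := by exact_mod_cast hk1
        have hle2 : (cnt0 (MMp f e0 d0) : ℤ) ≤ (cnt0 (MMp f e0 d0) : ℤ) * (cnt0 s0 : ℤ) := by
          have h1' : (1:ℤ) ≤ (cnt0 s0 : ℤ) := by exact_mod_cast hk0'
          nlinarith [Int.ofNat_nonneg (cnt0 (MMp f e0 d0))]
        omega
      · have : (1:ℤ) ≤ fsize b := by exact_mod_cast hX
        omega
    linarith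

include hf in
/-- No tower node is an instance of the pattern. -/
lemma nf_tower {X c : Fm L}
    (h : (Fm.op f (fun _ : Fin (L.ar f) => X)) = Fm.subst1 0 c (dhat f e0 d0)) : False := by
  have htri : (Fm.op f (fun _ : Fin (L.ar f) => X)) = tri f X X X := by
    rw [tri]
    congr 1
    funext i
    by_cases h0 : i.val = 0
    · simp [h0]
    · by_cases h1 : i.val = 1 <;> simp [h0, h1]
  rw [htri, dhat_inst f e0 d0 hf] at h
  obtain ⟨hA, hB⟩ := tri_inj f hf h
  -- then Bc = MMp(Bc): size contradiction
  rw [hA] at hB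
  have e3 := fsize_subst1 (Fm.subst1 0 c (Bt f e0 d0)) (MMp f e0 d0)
  rw [← hB] at e3
  have hC : 2 ^ mexp f e0 d0 ≤ fsize (Fm.subst1 0 c (Bt f e0 d0)) :=
    Tow_size_ge f hf c _
  have hMM2 : 2 ≤ fsize (MMp f e0 d0) := two_le_fsize_MMp f e0 d0 hf
  have hMMlt := mexp_gt_MMp f e0 d0
  by_cases hkM : cnt0 (MMp f e0 d0) = 0
  · rw [hkM] at e3
    omega
  · have hk1 : 1 ≤ cnt0 (MMp f e0 d0) := by omega
    have hB1 : 1 ≤ fsize (Fm.subst1 0 c (Bt f e0 d0)) := one_le_fsize _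
    have : cnt0 (MMp f e0 d0) + fsize (Fm.subst1 0 c (Bt f e0 d0)) ≤
        cnt0 (MMp f e0 d0) * fsize (Fm.subst1 0 c (Bt f e0 d0)) + 1 := by nlinarith
    omega

include hf hne he hd in
/-- Instances of `ε̂` are never instances of `δ̂`. -/
lemma ehat_dhat_ne : ∀ b c : Fm L,
    Fm.subst1 0 b (ehat f e0 d0) ≠ Fm.subst1 0 c (dhat f e0 d0) := by
  intro b c h
  rw [ehat_inst f e0 d0 hf, dhat_inst f e0 d0 hf] at h
  obtain ⟨hA, hB⟩ := tri_inj f hf h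
  rw [hA] at hB
  -- MMq(β) = MMp(β) where β := subst1 0 c Bt
  rw [MMp, MMq] at hB
  simp only [Fm.subst1] at hB
  rw [tri_subst, tri_subst] at hB
  have hslot := (tri_inj f hf hB).1
  -- d0(β) = e0(β)
  have hbad : Fm.subst1 0 (Fm.subst1 0 c (Bt f e0 d0)) e0 =
      Fm.subst1 0 (Fm.subst1 0 c (Bt f e0 d0)) d0 := hslot.symm
  have hw := wsz_bound e0 d0 hne he hd _ hbad
  have hC : 2 ^ mexp f e0 d0 ≤ fsize (Fm.subst1 0 c (Bt f e0 d0)) :=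
    Tow_size_ge f hf c _
  have := mexp_gt_wsz f e0 d0
  omega

include hf hne he hd in
lemma ehat_ne_dhat : ehat f e0 d0 ≠ dhat f e0 d0 := by
  intro h
  apply ehat_dhat_ne f e0 d0 hf hne he hd (.var 0) (.var 0)
  rw [subst1_zero_var, subst1_zero_var, h]

end Pattern

end FmAux
namespace FmAux

open scoped Classical

variable {L : Sig}

section CleanEval

variable (f : L.Op) (e0 d0 : Fm L) (T : Set (Fm L))
variable (hf : 2 ≤ L.ar f) (hne : e0 ≠ d0)
variable (he : e0.vars ⊆ ({0} : Set ℕ)) (hd : d0.vars ⊆ ({0} : Set ℕ))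

/-- Shorthand for the normalization function for this pattern. -/
noncomputable def Nrm : Fm L → Fm L := NN (dhat f e0 d0) (ehat f e0 d0) T

include hf in
lemma Nrm_op_fire {g : L.Op} {as : Fin (L.ar g) → Fm L} {c : Fm L}
    (hc : Fm.op g (fun i => Nrm f e0 d0 T (as i)) = Fm.subst1 0 c (dhat f e0 d0))
    (hcT : c ∈ T) (hcN : Nrm f e0 d0 T c = c) :
    Nrm f e0 d0 T (.op g as) = Fm.subst1 0 c (ehat f e0 d0) :=
  NN_op_fire _ _ T (dhat_var f e0 d0 hf) (dhat_nv f e0 d0 hf) (hsz_ehat_dhat f e0 d0 hf)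
    (dhat_inj f e0 d0 hf) hc hcT hcN

include hf in
lemma Nrm_op_nofire {g : L.Op} {as : Fin (L.ar g) → Fm L}
    (h : ∀ c, Fm.op g (fun i => Nrm f e0 d0 T (as i)) = Fm.subst1 0 c (dhat f e0 d0) →
      c ∈ T → Nrm f e0 d0 T c = c → False) :
    Nrm f e0 d0 T (.op g as) = Fm.op g (fun i => Nrm f e0 d0 T (as i)) :=
  NN_op_nofire _ _ T (dhat_var f e0 d0 hf) (dhat_nv f e0 d0 hf) (hsz_ehat_dhat f e0 d0 hf)
    (dhat_inj f e0 d0 hf) h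

include hf in
lemma Nrm_op_eq (g : L.Op) (as : Fin (L.ar g) → Fm L) :
    Nrm f e0 d0 T (.op g as) = (if h : ∃ c, Fm.op g (fun i => Nrm f e0 d0 T (as i)) =
        Fm.subst1 0 c (dhat f e0 d0) ∧ c ∈ T ∧ Nrm f e0 d0 T c = c
      then Fm.subst1 0 h.choose (ehat f e0 d0)
      else Fm.op g (fun i => Nrm f e0 d0 T (as i))) :=
  NN_op_eq _ _ T (dhat_var f e0 d0 hf) (dhat_nv f e0 d0 hf) (hsz_ehat_dhat f e0 d0 hf)
    (dhat_inj f e0 d0 hf) g as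

lemma Nrm_var (n : ℕ) : Nrm f e0 d0 T (.var n) = .var n := NN_var _ _ T n

include hf in
lemma tower_clean {b : Fm L} (hb : Nrm f e0 d0 T b = b) :
    ∀ j, Nrm f e0 d0 T (Fm.subst1 0 b (Tow f j)) = Fm.subst1 0 b (Tow f j)
  | 0 => by rw [Tow, subst1_var_self]; exact hb
  | (j+1) => by
      rw [Tow_subst1]
      have hch : (fun i : Fin (L.ar f) => Nrm f e0 d0 T (Fm.subst1 0 b (Tow f j))) =
          (fun _ : Fin (L.ar f) => Fm.subst1 0 b (Tow f j)) :=
        funext fun i => tower_clean hb j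
      rw [Nrm_op_nofire f e0 d0 T hf, hch]
      intro c hc _ _
      rw [hch] at hc
      exact nf_tower f e0 d0 hf hc

include hf hne he hd in
lemma chunk_clean {b : Fm L} (hb : Nrm f e0 d0 T b = b) :
    ∀ (s : Fm L), (Sub s e0 ∨ Sub s d0) →
      Nrm f e0 d0 T (Fm.subst1 0 (Fm.subst1 0 b (Bt f e0 d0)) s) =
        Fm.subst1 0 (Fm.subst1 0 b (Bt f e0 d0)) s
  | .var n, hs => by
      have hn : n = 0 := by
        have hmem : n ∈ (Fm.var n : Fm L).vars := by simp [Fm.vars]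
        rcases hs with h | h
        · simpa using he (h.vars_subset hmem)
        · simpa using hd (h.vars_subset hmem)
      subst hn
      rw [subst1_var_self]
      exact tower_clean f e0 d0 T hf hb (mexp f e0 d0)
  | .op g ss, hs => by
      have hsub : ∀ i, Sub (ss i) e0 ∨ Sub (ss i) d0 := by
        intro i
        rcases hs with h | h
        · exact Or.inl (Sub.trans (Sub.step i (Sub.refl _)) h)
        · exact Or.inr (Sub.trans (Sub.step i (Sub.refl _)) h)
      have hexp : Fm.subst1 0 (Fm.subst1 0 b (Bt f e0 d0)) (.op g ss) =
          .op g (fun i => Fm.subst1 0 (Fm.subst1 0 b (Bt f e0 d0)) (ss i)) := rfl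
      rw [hexp]
      have hch : (fun i => Nrm f e0 d0 T (Fm.subst1 0 (Fm.subst1 0 b (Bt f e0 d0)) (ss i))) =
          (fun i => Fm.subst1 0 (Fm.subst1 0 b (Bt f e0 d0)) (ss i)) :=
        funext fun i => chunk_clean hb (ss i) (hsub i)
      rw [Nrm_op_nofire f e0 d0 T hf, hch]
      intro c hc _ _
      rw [hch] at hc
      rw [dhat_inst f e0 d0 hf] at hc
      rw [tri] at hc
      injection hc with hgf hslots
      subst hgf
      have hslots' := eq_of_heq hslots
      have h0 := congrFun hslots' ⟨0, by omega⟩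
      have h1 := congrFun hslots' ⟨1, by omega⟩
      norm_num at h0 h1
      refine nf_main g e0 d0 hf (s0 := ss ⟨0, by omega⟩) (s1 := ss ⟨1, by omega⟩)
        ?_ ?_ ?_ h0 ?_
      · rcases hsub ⟨0, by omega⟩ with h | h
        · exact le_trans h.fsize_le (le_max_left _ _)
        · exact le_trans h.fsize_le (le_max_right _ _)
      · have hlt : max (fsize e0) (fsize d0) < fsize (MMp g e0 d0) := by
          have := fsize_e0_lt_MMp g e0 d0 hf he
          have := fsize_d0_lt_MMp g e0 d0 hf hd
          omega
        rcases hsub ⟨1, by omega⟩ with h | h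
        · have := h.fsize_le; omega
        · have := h.fsize_le; omega
      · have := cnt0_le_MMp g e0 d0 hf
        rcases hsub ⟨1, by omega⟩ with h | h
        · have := h.cnt0_le; omega
        · have := h.cnt0_le; omega
      · exact h1

include hf hne he hd in
lemma mmp_clean {b : Fm L} (hb : Nrm f e0 d0 T b = b) :
    Nrm f e0 d0 T (Fm.subst1 0 (Fm.subst1 0 b (Bt f e0 d0)) (MMp f e0 d0)) =
      Fm.subst1 0 (Fm.subst1 0 b (Bt f e0 d0)) (MMp f e0 d0) := by
  set β := Fm.subst1 0 b (Bt f e0 d0) with hβ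
  have hexp : Fm.subst1 0 β (MMp f e0 d0) =
      tri f (Fm.subst1 0 β e0) (Fm.subst1 0 β d0) (Fm.subst1 0 β d0) := by
    rw [MMp]
    simp only [Fm.subst1]
    rw [tri_subst]
  rw [hexp, tri]
  have hch : (fun i : Fin (L.ar f) => Nrm f e0 d0 T
      (if i.val = 0 then Fm.subst1 0 β e0 else if i.val = 1 then Fm.subst1 0 β d0
        else Fm.subst1 0 β d0)) =
      (fun i : Fin (L.ar f) => if i.val = 0 then Fm.subst1 0 β e0
        else if i.val = 1 then Fm.subst1 0 β d0 else Fm.subst1 0 β d0) := by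
    funext i
    by_cases h0 : i.val = 0
    · simp only [h0, if_pos rfl]
      exact chunk_clean f e0 d0 T hf hne he hd hb e0 (Or.inl (Sub.refl _))
    · by_cases h1 : i.val = 1 <;>
        · simp only [h0, h1, if_neg, if_pos, if_true, if_false]
          first
          | exact chunk_clean f e0 d0 T hf hne he hd hb d0 (Or.inr (Sub.refl _))
          | exact chunk_clean f e0 d0 T hf hne he hd hb e0 (Or.inl (Sub.refl _))
  rw [Nrm_op_nofire f e0 d0 T hf, hch]
  intro c hc _ _
  rw [hch] at hc
  have hc' : tri f (Fm.subst1 0 β e0) (Fm.subst1 0 β d0) (Fm.subst1 0 β d0) =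
      Fm.subst1 0 c (dhat f e0 d0) := hc
  rw [dhat_inst f e0 d0 hf] at hc'
  obtain ⟨hA, hB⟩ := tri_inj f hf hc'
  refine nf_main f e0 d0 hf (s0 := e0) (s1 := d0) (le_max_left _ _)
    (fsize_d0_lt_MMp f e0 d0 hf hd) (cnt0_le_MMp f e0 d0 hf).2 hA hB

include hf hne he hd in
lemma mmq_clean {b : Fm L} (hb : Nrm f e0 d0 T b = b) :
    Nrm f e0 d0 T (Fm.subst1 0 (Fm.subst1 0 b (Bt f e0 d0)) (MMq f e0 d0)) =
      Fm.subst1 0 (Fm.subst1 0 b (Bt f e0 d0)) (MMq f e0 d0) := by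
  set β := Fm.subst1 0 b (Bt f e0 d0) with hβ
  have hexp : Fm.subst1 0 β (MMq f e0 d0) =
      tri f (Fm.subst1 0 β d0) (Fm.subst1 0 β e0) (Fm.subst1 0 β d0) := by
    rw [MMq]
    simp only [Fm.subst1]
    rw [tri_subst]
  rw [hexp, tri]
  have hch : (fun i : Fin (L.ar f) => Nrm f e0 d0 T
      (if i.val = 0 then Fm.subst1 0 β d0 else if i.val = 1 then Fm.subst1 0 β e0
        else Fm.subst1 0 β d0)) =
      (fun i : Fin (L.ar f) => if i.val = 0 then Fm.subst1 0 β d0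
        else if i.val = 1 then Fm.subst1 0 β e0 else Fm.subst1 0 β d0) := by
    funext i
    by_cases h0 : i.val = 0
    · simp only [h0, if_pos rfl]
      exact chunk_clean f e0 d0 T hf hne he hd hb d0 (Or.inr (Sub.refl _))
    · by_cases h1 : i.val = 1 <;>
        · simp only [h0, h1, if_neg, if_pos, if_true, if_false]
          first
          | exact chunk_clean f e0 d0 T hf hne he hd hb d0 (Or.inr (Sub.refl _))
          | exact chunk_clean f e0 d0 T hf hne he hd hb e0 (Or.inl (Sub.refl _))
  rw [Nrm_op_nofire f e0 d0 T hf, hch]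
  intro c hc _ _
  rw [hch] at hc
  have hc' : tri f (Fm.subst1 0 β d0) (Fm.subst1 0 β e0) (Fm.subst1 0 β d0) =
      Fm.subst1 0 c (dhat f e0 d0) := hc
  rw [dhat_inst f e0 d0 hf] at hc'
  obtain ⟨hA, hB⟩ := tri_inj f hf hc'
  refine nf_main f e0 d0 hf (s0 := d0) (s1 := e0) (le_max_right _ _)
    (fsize_e0_lt_MMp f e0 d0 hf he) (cnt0_le_MMp f e0 d0 hf).1 hA hB

end CleanEval

end FmAux
namespace FmAux

open scoped Classical

variable {L : Sig}

section CL

variable (f : L.Op) (e0 d0 : Fm L) (T : Set (Fm L))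
variable (hf : 2 ≤ L.ar f) (hne : e0 ≠ d0)
variable (he : e0.vars ⊆ ({0} : Set ℕ)) (hd : d0.vars ⊆ ({0} : Set ℕ))

include hf hne he hd in
lemma nrm_dhat_children {b : Fm L} (hb : Nrm f e0 d0 T b = b) :
    (fun i : Fin (L.ar f) => Nrm f e0 d0 T
      (if i.val = 0 then Fm.subst1 0 b (Bt f e0 d0)
        else if i.val = 1 then Fm.subst1 0 (Fm.subst1 0 b (Bt f e0 d0)) (MMp f e0 d0)
        else Fm.subst1 0 (Fm.subst1 0 b (Bt f e0 d0)) (MMp f e0 d0))) =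
    (fun i : Fin (L.ar f) => if i.val = 0 then Fm.subst1 0 b (Bt f e0 d0)
        else if i.val = 1 then Fm.subst1 0 (Fm.subst1 0 b (Bt f e0 d0)) (MMp f e0 d0)
        else Fm.subst1 0 (Fm.subst1 0 b (Bt f e0 d0)) (MMp f e0 d0)) := by
  funext i
  by_cases h0 : i.val = 0
  · simp only [h0, if_pos rfl]
    exact tower_clean f e0 d0 T hf hb (mexp f e0 d0)
  · by_cases h1 : i.val = 1 <;>
      · simp only [h0, h1, if_neg, if_pos, if_true, if_false]
        exact mmp_clean f e0 d0 T hf hne he hd hb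

include hf hne he hd in
lemma nrm_dhat_inst_mem {b : Fm L} (hb : Nrm f e0 d0 T b = b) (hbT : b ∈ T) :
    Nrm f e0 d0 T (Fm.subst1 0 b (dhat f e0 d0)) = Fm.subst1 0 b (ehat f e0 d0) := by
  rw [dhat_inst f e0 d0 hf, tri]
  refine Nrm_op_fire f e0 d0 T hf (c := b) ?_ hbT hb
  rw [nrm_dhat_children f e0 d0 T hf hne he hd hb]
  rw [dhat_inst f e0 d0 hf, tri]

include hf hne he hd in
lemma nrm_dhat_inst_not_mem {b : Fm L} (hb : Nrm f e0 d0 T b = b) (hbT : b ∉ T) :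
    Nrm f e0 d0 T (Fm.subst1 0 b (dhat f e0 d0)) = Fm.subst1 0 b (dhat f e0 d0) := by
  conv_lhs => rw [dhat_inst f e0 d0 hf, tri]
  rw [Nrm_op_nofire f e0 d0 T hf, nrm_dhat_children f e0 d0 T hf hne he hd hb,
    ← tri, ← dhat_inst f e0 d0 hf]
  intro c hc hcT _
  rw [nrm_dhat_children f e0 d0 T hf hne he hd hb, ← tri, ← dhat_inst f e0 d0 hf] at hc
  have := dhat_inj f e0 d0 hf b c hc
  exact hbT (this ▸ hcT)

include hf hne he hd in
lemma nrm_ehat_inst {b : Fm L} (hb : Nrm f e0 d0 T b = b) :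
    Nrm f e0 d0 T (Fm.subst1 0 b (ehat f e0 d0)) = Fm.subst1 0 b (ehat f e0 d0) := by
  have hch : (fun i : Fin (L.ar f) => Nrm f e0 d0 T
      (if i.val = 0 then Fm.subst1 0 b (Bt f e0 d0)
        else if i.val = 1 then Fm.subst1 0 (Fm.subst1 0 b (Bt f e0 d0)) (MMq f e0 d0)
        else Fm.subst1 0 (Fm.subst1 0 b (Bt f e0 d0)) (MMp f e0 d0))) =
      (fun i : Fin (L.ar f) => if i.val = 0 then Fm.subst1 0 b (Bt f e0 d0)
        else if i.val = 1 then Fm.subst1 0 (Fm.subst1 0 b (Bt f e0 d0)) (MMq f e0 d0)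
        else Fm.subst1 0 (Fm.subst1 0 b (Bt f e0 d0)) (MMp f e0 d0)) := by
    funext i
    by_cases h0 : i.val = 0
    · simp only [h0, if_pos rfl]
      exact tower_clean f e0 d0 T hf hb (mexp f e0 d0)
    · by_cases h1 : i.val = 1 <;>
        · simp only [h0, h1, if_neg, if_pos, if_true, if_false]
          first
          | exact mmq_clean f e0 d0 T hf hne he hd hb
          | exact mmp_clean f e0 d0 T hf hne he hd hb
  conv_lhs => rw [ehat_inst f e0 d0 hf, tri]
  rw [Nrm_op_nofire f e0 d0 T hf, hch, ← tri, ← ehat_inst f e0 d0 hf]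
  intro c hc _ _
  rw [hch, ← tri, ← ehat_inst f e0 d0 hf] at hc
  exact ehat_dhat_ne f e0 d0 hf hne he hd b c hc

include hf hne he hd in
lemma nrm_idem : ∀ t : Fm L, Nrm f e0 d0 T (Nrm f e0 d0 T t) = Nrm f e0 d0 T t := by
  suffices H : ∀ (n : ℕ) (t : Fm L), fsize t ≤ n →
      Nrm f e0 d0 T (Nrm f e0 d0 T t) = Nrm f e0 d0 T t by
    exact fun t => H (fsize t) t le_rfl
  intro n
  induction n with
  | zero => intro t ht; have := one_le_fsize t; omega
  | succ n ih =>
    intro t ht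
    cases t with
    | var k => rw [Nrm_var, Nrm_var]
    | op g as =>
      rw [Nrm_op_eq f e0 d0 T hf g as]
      split
      · next h =>
        exact nrm_ehat_inst f e0 d0 T hf hne he hd h.choose_spec.2.2
      · next h =>
        have hsz : ∀ i, fsize (as i) ≤ n := by
          intro i
          have h1 : fsize (as i) ≤ ∑ j, fsize (as j) :=
            Finset.single_le_sum (f := fun j => fsize (as j)) (fun j _ => Nat.zero_le _)
              (Finset.mem_univ i)
          simp only [fsize] at ht
          omega
        have hch : (fun i => Nrm f e0 d0 T (Nrm f e0 d0 T (as i))) =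
            (fun i => Nrm f e0 d0 T (as i)) := funext fun i => ih (as i) (hsz i)
        rw [Nrm_op_eq f e0 d0 T hf g (fun i => Nrm f e0 d0 T (as i))]
        rw [dif_neg]
        · rw [hch]
        · rw [hch]
          exact h

include hf hne he hd in
lemma nrm_op_congr {g : L.Op} {as bs : Fin (L.ar g) → Fm L}
    (h : ∀ i, Nrm f e0 d0 T (as i) = Nrm f e0 d0 T (bs i)) :
    Nrm f e0 d0 T (.op g as) = Nrm f e0 d0 T (.op g bs) := by
  rw [Nrm_op_eq f e0 d0 T hf g as, Nrm_op_eq f e0 d0 T hf g bs, funext h]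

include hf hne he hd in
lemma nrm_subst_inst : ∀ (t γ : Fm L),
    Nrm f e0 d0 T (Fm.subst1 0 γ t) = Nrm f e0 d0 T (Fm.subst1 0 (Nrm f e0 d0 T γ) t)
  | .var n, γ => by
      by_cases h : n = 0
      · subst h
        rw [subst1_var_self, subst1_var_self]
        exact (nrm_idem f e0 d0 T hf hne he hd γ).symm
      · have h1 : Fm.subst1 0 γ (.var n) = .var n := by
          simp [Fm.subst1, Fm.subst, h]
        have h2 : Fm.subst1 0 (Nrm f e0 d0 T γ) (.var n) = .var n := by
          simp [Fm.subst1, Fm.subst, h]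
        rw [h1, h2]
  | .op g ss, γ => by
      have e1 : Fm.subst1 0 γ (.op g ss) = .op g (fun i => Fm.subst1 0 γ (ss i)) := rfl
      have e2 : Fm.subst1 0 (Nrm f e0 d0 T γ) (.op g ss) =
          .op g (fun i => Fm.subst1 0 (Nrm f e0 d0 T γ) (ss i)) := rfl
      rw [e1, e2]
      exact nrm_op_congr f e0 d0 T hf hne he hd
        (fun i => nrm_subst_inst (ss i) γ)

end CL

end FmAux
namespace FmAux

open scoped Classical

variable {L : Sig}

lemma one_not_mem {X : Fm L} (hX : X.vars ⊆ ({0} : Set ℕ)) : (1:ℕ) ∉ X.vars := by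
  intro h
  have := hX h
  simp at this

lemma subst_subst1_unary {X : Fm L} (hX : X.vars ⊆ ({0} : Set ℕ)) (γ : Fm L) (u : ℕ → Fm L) :
    (Fm.subst1 0 γ X).subst u = Fm.subst1 0 (γ.subst u) X := by
  rw [Fm.subst1, Fm.subst1, subst_subst]
  apply subst_congr
  intro n hn
  have : n = 0 := by simpa using hX hn
  simp [this]

section LogEq

variable (ℒ : Logic L) (f : L.Op) (e0 d0 : Fm L)
variable (hf : 2 ≤ L.ar f) (hne : e0 ≠ d0)
variable (he : e0.vars ⊆ ({0} : Set ℕ)) (hd : d0.vars ⊆ ({0} : Set ℕ))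
variable (heqv : LogEquiv ℒ e0 d0)

include hf he hd heqv in
lemma logEquiv_MM : LogEquiv ℒ (MMp f e0 d0) (MMq f e0 d0) := by
  have step1 : LogEquiv ℒ (MMp f e0 d0) (tri f e0 e0 d0) := by
    have h1 : Fm.subst1 1 d0 (tri f e0 (.var 1) d0) = MMp f e0 d0 := by
      rw [Fm.subst1, tri_subst, MMp]
      rw [show e0.subst (fun n => if n = 1 then d0 else Fm.var n) = e0 from
        subst1_not_mem (one_not_mem he)]
      rw [show (Fm.var 1 : Fm L).subst (fun n => if n = 1 then d0 else Fm.var n) = d0 by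
        simp [Fm.subst]]
      rw [show d0.subst (fun n => if n = 1 then d0 else Fm.var n) = d0 from
        subst1_not_mem (one_not_mem hd)]
    have h2 : Fm.subst1 1 e0 (tri f e0 (.var 1) d0) = tri f e0 e0 d0 := by
      rw [Fm.subst1, tri_subst]
      rw [show (Fm.var 1 : Fm L).subst (fun n => if n = 1 then e0 else Fm.var n) = e0 by
        simp [Fm.subst]]
      rw [show d0.subst (fun n => if n = 1 then e0 else Fm.var n) = d0 from
        subst1_not_mem (one_not_mem hd)]
      rw [show e0.subst (fun n => if n = 1 then e0 else Fm.var n) = e0 from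
        subst1_not_mem (one_not_mem he)]
    rw [← h1, ← h2]
    exact logEquiv_ctx (logEquiv_symm heqv) _ 1
  have step2 : LogEquiv ℒ (tri f e0 e0 d0) (MMq f e0 d0) := by
    have h1 : Fm.subst1 1 e0 (tri f (.var 1) e0 d0) = tri f e0 e0 d0 := by
      rw [Fm.subst1, tri_subst]
      rw [show (Fm.var 1 : Fm L).subst (fun n => if n = 1 then e0 else Fm.var n) = e0 by
        simp [Fm.subst]]
      rw [show d0.subst (fun n => if n = 1 then e0 else Fm.var n) = d0 from
        subst1_not_mem (one_not_mem hd)]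
      rw [show e0.subst (fun n => if n = 1 then e0 else Fm.var n) = e0 from
        subst1_not_mem (one_not_mem he)]
    have h2 : Fm.subst1 1 d0 (tri f (.var 1) e0 d0) = MMq f e0 d0 := by
      rw [Fm.subst1, tri_subst, MMq]
      rw [show (Fm.var 1 : Fm L).subst (fun n => if n = 1 then d0 else Fm.var n) = d0 by
        simp [Fm.subst]]
      rw [show d0.subst (fun n => if n = 1 then d0 else Fm.var n) = d0 from
        subst1_not_mem (one_not_mem hd)]
      rw [show e0.subst (fun n => if n = 1 then d0 else Fm.var n) = e0 from
        subst1_not_mem (one_not_mem he)]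
    rw [← h1, ← h2]
    exact logEquiv_ctx heqv _ 1
  exact logEquiv_trans step1 step2

include hf hne he hd heqv in
lemma logEquiv_hat : LogEquiv ℒ (dhat f e0 d0) (ehat f e0 d0) := by
  have hMM := logEquiv_MM ℒ f e0 d0 hf he hd heqv
  have hMMv := MMp_vars f e0 d0 hf he hd
  have h1 : Fm.subst1 1 (MMp f e0 d0) (tri f (.var 0) (.var 1) (MMp f e0 d0)) =
      dl f e0 d0 := by
    rw [Fm.subst1, tri_subst, dl]
    rw [show (Fm.var 0 : Fm L).subst (fun n => if n = 1 then MMp f e0 d0 else Fm.var n) =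
      Fm.var 0 by simp [Fm.subst]]
    rw [show (Fm.var 1 : Fm L).subst (fun n => if n = 1 then MMp f e0 d0 else Fm.var n) =
      MMp f e0 d0 by simp [Fm.subst]]
    rw [show (MMp f e0 d0).subst (fun n => if n = 1 then MMp f e0 d0 else Fm.var n) =
      MMp f e0 d0 from subst1_not_mem (one_not_mem hMMv)]
  have h2 : Fm.subst1 1 (MMq f e0 d0) (tri f (.var 0) (.var 1) (MMp f e0 d0)) =
      ep f e0 d0 := by
    rw [Fm.subst1, tri_subst, ep]
    rw [show (Fm.var 0 : Fm L).subst (fun n => if n = 1 then MMq f e0 d0 else Fm.var n) =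
      Fm.var 0 by simp [Fm.subst]]
    rw [show (Fm.var 1 : Fm L).subst (fun n => if n = 1 then MMq f e0 d0 else Fm.var n) =
      MMq f e0 d0 by simp [Fm.subst]]
    rw [show (MMp f e0 d0).subst (fun n => if n = 1 then MMq f e0 d0 else Fm.var n) =
      MMp f e0 d0 from subst1_not_mem (one_not_mem hMMv)]
  have hle : LogEquiv ℒ (dl f e0 d0) (ep f e0 d0) := by
    rw [← h1, ← h2]
    exact logEquiv_ctx hMM _ 1
  have := logEquiv_subst hle (fun n => if n = 0 then Bt f e0 d0 else .var n)
  exact this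

include hf hne he hd heqv in
lemma nrm_logEquiv (T : Set (Fm L)) : ∀ t : Fm L, LogEquiv ℒ t (Nrm f e0 d0 T t) := by
  suffices H : ∀ (n : ℕ) (t : Fm L), fsize t ≤ n → LogEquiv ℒ t (Nrm f e0 d0 T t) by
    exact fun t => H (fsize t) t le_rfl
  intro n
  induction n with
  | zero => intro t ht; have := one_le_fsize t; omega
  | succ n ih =>
    intro t ht
    cases t with
    | var k => rw [Nrm_var]; exact logEquiv_refl ℒ _
    | op g as =>
      have hsz : ∀ i, fsize (as i) ≤ n := by
        intro i
        have h1 : fsize (as i) ≤ ∑ j, fsize (as j) :=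
          Finset.single_le_sum (f := fun j => fsize (as j)) (fun j _ => Nat.zero_le _)
            (Finset.mem_univ i)
        simp only [fsize] at ht
        omega
      have hstep1 : LogEquiv ℒ (.op g as) (.op g (fun i => Nrm f e0 d0 T (as i))) :=
        logEquiv_op g as _ (fun i => ih (as i) (hsz i))
      refine logEquiv_trans hstep1 ?_
      rw [Nrm_op_eq f e0 d0 T hf g as]
      split
      · next h =>
        rcases h.choose_spec with ⟨hu, _, _⟩
        have LE : LogEquiv ℒ (Fm.subst1 0 h.choose (dhat f e0 d0))
            (Fm.subst1 0 h.choose (ehat f e0 d0)) :=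
          logEquiv_subst (logEquiv_hat ℒ f e0 d0 hf hne he hd heqv)
            (fun n => if n = 0 then h.choose else .var n)
        rw [← hu] at LE
        exact LE
      · exact logEquiv_refl ℒ _

include hf hne he hd heqv in
lemma mem_nrm_iff (T : Set (Fm L)) (hT : ∀ χ, ℒ.deriv T χ → χ ∈ T) (t : Fm L) :
    Nrm f e0 d0 T t ∈ T ↔ t ∈ T := by
  have hle := nrm_logEquiv ℒ f e0 d0 hf hne he hd heqv T t
  have d1 : ℒ.deriv {t} (Nrm f e0 d0 T t) := logEquiv_deriv_single hle
  have d2 : ℒ.deriv {Nrm f e0 d0 T t} t := logEquiv_deriv_single (logEquiv_symm hle)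
  constructor
  · intro hmem
    refine hT t (ℒ.cut {Nrm f e0 d0 T t} T t d2 ?_)
    intro γ hγ
    rw [Set.mem_singleton_iff] at hγ
    subst hγ
    exact ℒ.axm _ _ hmem
  · intro hmem
    refine hT _ (ℒ.cut {t} T _ d1 ?_)
    intro γ hγ
    rw [Set.mem_singleton_iff] at hγ
    subst hγ
    exact ℒ.axm _ _ hmem

include hf hne he hd heqv in
lemma key_iff (T : Set (Fm L)) (hT : ∀ χ, ℒ.deriv T χ → χ ∈ T) (γ : Fm L) :
    (Nrm f e0 d0 T (Fm.subst1 0 γ (ehat f e0 d0)) =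
      Nrm f e0 d0 T (Fm.subst1 0 γ (dhat f e0 d0))) ↔ γ ∈ T := by
  rw [nrm_subst_inst f e0 d0 T hf hne he hd (ehat f e0 d0) γ,
      nrm_subst_inst f e0 d0 T hf hne he hd (dhat f e0 d0) γ]
  have hb : Nrm f e0 d0 T (Nrm f e0 d0 T γ) = Nrm f e0 d0 T γ :=
    nrm_idem f e0 d0 T hf hne he hd γ
  have hmem : (Nrm f e0 d0 T γ ∈ T) ↔ γ ∈ T :=
    mem_nrm_iff ℒ f e0 d0 hf hne he hd heqv T hT γ
  rw [nrm_ehat_inst f e0 d0 T hf hne he hd hb]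
  by_cases hbT : Nrm f e0 d0 T γ ∈ T
  · rw [nrm_dhat_inst_mem f e0 d0 T hf hne he hd hb hbT]
    simp only [true_iff, hmem.1 hbT]
  · rw [nrm_dhat_inst_not_mem f e0 d0 T hf hne he hd hb hbT]
    constructor
    · intro h
      exact absurd h (ehat_dhat_ne f e0 d0 hf hne he hd _ _)
    · intro h
      exact absurd (hmem.2 h) hbT

end LogEq

section Quotient

variable (f : L.Op) (e0 d0 : Fm L) (T : Set (Fm L))
variable (hf : 2 ≤ L.ar f) (hne : e0 ≠ d0)
variable (he : e0.vars ⊆ ({0} : Set ℕ)) (hd : d0.vars ⊆ ({0} : Set ℕ))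

/-- The kernel of the normalization map. -/
def kerN : Fm L → Fm L → Prop := fun p q => Nrm f e0 d0 T p = Nrm f e0 d0 T q

/-- The quotient algebra. -/
noncomputable def QA : Alg L :=
  { carrier := Quot (kerN f e0 d0 T),
    interp := fun g as => Quot.mk _ (Fm.op g (fun i => (as i).out)) }

lemma QA_mk_eq {a b : Fm L} : (Quot.mk (kerN f e0 d0 T) a = Quot.mk (kerN f e0 d0 T) b) ↔
    Nrm f e0 d0 T a = Nrm f e0 d0 T b := by
  constructor
  · intro h
    have := congrArg (Quot.lift (Nrm f e0 d0 T) (fun a b hab => hab)) h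
    simpa using this
  · exact fun h => Quot.sound h

lemma QA_mk_eq' {a b : Fm L} : (@Eq (QA f e0 d0 T).carrier (Quot.mk (kerN f e0 d0 T) a)
    (Quot.mk (kerN f e0 d0 T) b)) ↔ Nrm f e0 d0 T a = Nrm f e0 d0 T b :=
  QA_mk_eq f e0 d0 T

include hf hne he hd in
lemma QA_eval (u : ℕ → Fm L) : ∀ t : Fm L,
    Fm.eval (QA f e0 d0 T) (fun n => Quot.mk _ (u n)) t = Quot.mk _ (t.subst u)
  | .var n => rfl
  | .op g as => by
      show Quot.mk _ (Fm.op g fun i =>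
        (Fm.eval (QA f e0 d0 T) (fun n => Quot.mk _ (u n)) (as i)).out) = _
      have hch : ∀ i, Fm.eval (QA f e0 d0 T) (fun n => Quot.mk _ (u n)) (as i) =
          Quot.mk _ ((as i).subst u) := fun i => QA_eval u (as i)
      rw [show (fun i => (Fm.eval (QA f e0 d0 T) (fun n => Quot.mk _ (u n)) (as i)).out) =
        (fun i => (Quot.mk (kerN f e0 d0 T) ((as i).subst u)).out) by
          funext i; rw [hch i]]
      apply Quot.sound
      show Nrm f e0 d0 T _ = Nrm f e0 d0 T _
      have hout : ∀ x : Fm L, Nrm f e0 d0 T ((Quot.mk (kerN f e0 d0 T) x).out) =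
          Nrm f e0 d0 T x := by
        intro x
        exact (QA_mk_eq f e0 d0 T).1 (Quot.out_eq _)
      exact nrm_op_congr f e0 d0 T hf hne he hd (fun i => hout _)

end Quotient

end FmAux
namespace FmAux

open scoped Classical

variable {L : Sig}

lemma sufficiency (ℒ : Logic L) (hnt : NontrivialLogic ℒ) (hproto : Protoalgebraic ℒ)
    (hp : ∃ ε δ : Fm L, ε ≠ δ ∧ LogEquiv ℒ ε δ) : HasAlgSem ℒ := by
  obtain ⟨e0, d0, hne, he, hd, heqv⟩ := exists_unary_pair hnt hp
  obtain ⟨f, hf⟩ := exists_binary_op hnt hproto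
  refine ⟨{(ehat f e0 d0, dhat f e0 d0)},
    {A | ∃ T : Set (Fm L), (∀ χ, ℒ.deriv T χ → χ ∈ T) ∧ A = QA f e0 d0 T}, ?_, ?_⟩
  · intro e hemem
    rw [Set.mem_singleton_iff] at hemem
    subst hemem
    exact ⟨ehat_vars f e0 d0 hf he hd, dhat_vars f e0 d0 hf he hd⟩
  · intro Γ φ
    constructor
    · intro hderiv e hemem A hA v hhyp
      rcases hemem with ⟨p, hpmem, rfl⟩
      rw [Set.mem_singleton_iff] at hpmem
      subst hpmem
      rcases hA with ⟨T, hT, rfl⟩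
      have hv : v = fun n => Quot.mk (kerN f e0 d0 T) ((v n).out) := by
        funext n
        exact (Quot.out_eq _).symm
      set u : ℕ → Fm L := fun n => (v n).out with hu
      show Fm.eval _ v (Fm.subst1 0 φ (ehat f e0 d0)) =
        Fm.eval _ v (Fm.subst1 0 φ (dhat f e0 d0))
      rw [hv, QA_eval f e0 d0 T hf hne he hd u, QA_eval f e0 d0 T hf hne he hd u,
        QA_mk_eq', subst_subst1_unary (ehat_vars f e0 d0 hf he hd) φ u,
        subst_subst1_unary (dhat_vars f e0 d0 hf he hd) φ u,
        key_iff ℒ f e0 d0 hf hne he hd heqv T hT (φ.subst u)]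
      have hΓT : ∀ γ ∈ Γ, γ.subst u ∈ T := by
        intro γ hγ
        have hpmem2 : (Fm.subst1 0 γ (ehat f e0 d0), Fm.subst1 0 γ (dhat f e0 d0)) ∈
            tauAppSet {(ehat f e0 d0, dhat f e0 d0)} Γ := by
          refine Set.mem_biUnion hγ ?_
          exact ⟨(ehat f e0 d0, dhat f e0 d0), rfl, rfl⟩
        have hthis := hhyp _ hpmem2
        simp only at hthis
        rw [hv, QA_eval f e0 d0 T hf hne he hd u, QA_eval f e0 d0 T hf hne he hd u,
          QA_mk_eq', subst_subst1_unary (ehat_vars f e0 d0 hf he hd) γ u,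
          subst_subst1_unary (dhat_vars f e0 d0 hf he hd) γ u,
          key_iff ℒ f e0 d0 hf hne he hd heqv T hT (γ.subst u)] at hthis
        exact hthis
      have hder2 := ℒ.substInv u Γ φ hderiv
      refine hT _ (ℒ.cut _ T _ hder2 ?_)
      rintro γ' ⟨γ, hγ, rfl⟩
      exact ℒ.axm _ _ (hΓT γ hγ)
    · intro hsem
      set T : Set (Fm L) := {χ | ℒ.deriv Γ χ} with hTdef
      have hT : ∀ χ, ℒ.deriv T χ → χ ∈ T := by
        intro χ h
        exact ℒ.cut T Γ χ h (fun γ hγ => hγ)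
      have hmemK : QA f e0 d0 T ∈
          {A | ∃ T : Set (Fm L), (∀ χ, ℒ.deriv T χ → χ ∈ T) ∧ A = QA f e0 d0 T} :=
        ⟨T, hT, rfl⟩
      have happ := hsem (Fm.subst1 0 φ (ehat f e0 d0), Fm.subst1 0 φ (dhat f e0 d0))
        ⟨(ehat f e0 d0, dhat f e0 d0), rfl, rfl⟩ (QA f e0 d0 T) hmemK
        (fun n => Quot.mk _ (Fm.var n)) ?_
      · simp only at happ
        rw [QA_eval f e0 d0 T hf hne he hd (fun n => Fm.var n),
          QA_eval f e0 d0 T hf hne he hd (fun n => Fm.var n), QA_mk_eq',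
          subst_id, subst_id,
          key_iff ℒ f e0 d0 hf hne he hd heqv T hT φ] at happ
        exact happ
      · intro p hpmem
        rcases Set.mem_iUnion₂.1 hpmem with ⟨γ, hγ, hp'⟩
        rcases hp' with ⟨q, hq, rfl⟩
        rw [Set.mem_singleton_iff] at hq
        subst hq
        simp only
        rw [QA_eval f e0 d0 T hf hne he hd (fun n => Fm.var n),
          QA_eval f e0 d0 T hf hne he hd (fun n => Fm.var n), QA_mk_eq',
          subst_id, subst_id,
          key_iff ℒ f e0 d0 hf hne he hd heqv T hT γ]
        exact ℒ.axm Γ γ hγ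

end FmAux


/-- A nontrivial protoalgebraic logic has an algebraic semantics iff it has two distinct
logically equivalent formulas. -/
theorem protoalgebraic_alg_sem_iff {L : Sig} (ℒ : Logic L)
    (hnt : NontrivialLogic ℒ) (hproto : Protoalgebraic ℒ) :
    HasAlgSem ℒ ↔ ∃ ε δ : Fm L, ε ≠ δ ∧ LogEquiv ℒ ε δ := by
  constructor
  · exact FmAux.necessity hnt hproto
  · exact FmAux.sufficiency ℒ hnt hproto
end

section
/- Let ⊢ be a logic whose language is not graph-based (i.e., it has either two distinct unary connectives or a connective of arity ≥ 2). If there are two distinct logically equivalent formulas φ and ψ with Var(φ) ∪ Var(ψ) = {x}, then ⊢ has an algebraic semantics. -/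
/-- The signature is not graph-based: it has two distinct unary connectives or a
connective of arity ≥ 2. -/
def NotGraphBased (L : Sig) : Prop :=
  (∃ f g : L.Op, f ≠ g ∧ L.ar f = 1 ∧ L.ar g = 1) ∨ ∃ f : L.Op, 2 ≤ L.ar f

/-! ### Basic lemmas about formulas -/

namespace Fm
variable {L : Sig}

def size : Fm L → ℕ
  | .var _ => 1
  | .op _ as => 1 + Finset.univ.sum (fun i => (as i).size)

lemma size_pos (t : Fm L) : 0 < t.size := by
  cases t <;> simp [size]

lemma size_arg_lt {f : L.Op} (as : Fin (L.ar f) → Fm L) (i) :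
    (as i).size < (Fm.op f as).size := by
  have h : (as i).size ≤ Finset.univ.sum (fun i => (as i).size) :=
    Finset.single_le_sum (f := fun i => (as i).size) (fun _ _ => Nat.zero_le _)
      (Finset.mem_univ i)
  have h2 : (Fm.op f as).size = 1 + Finset.univ.sum (fun i => (as i).size) := rfl
  omega

lemma op_inj {f : L.Op} {as bs : Fin (L.ar f) → Fm L}
    (h : Fm.op f as = Fm.op f bs) : as = bs := by
  injection h with h1 h2

lemma subst_id (t : Fm L) : t.subst Fm.var = t := by
  induction t with
  | var n => rfl
  | op f as ih => simp only [subst]; congr 1; funext i; exact ih i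

lemma subst_subst (σ τ : ℕ → Fm L) (t : Fm L) :
    (t.subst σ).subst τ = t.subst (fun n => (σ n).subst τ) := by
  induction t with
  | var n => rfl
  | op f as ih => simp only [subst]; congr 1; funext i; exact ih i

lemma subst_congr {σ τ : ℕ → Fm L} {t : Fm L} (h : ∀ n ∈ t.vars, σ n = τ n) :
    t.subst σ = t.subst τ := by
  induction t with
  | var n => exact h n (by simp [vars])
  | op f as ih =>
    simp only [subst]; congr 1; funext i
    exact ih i (fun n hn => h n (by simp only [vars, Set.mem_iUnion]; exact ⟨i, hn⟩))

lemma mem_vars_subst {σ : ℕ → Fm L} {t : Fm L} {n : ℕ} :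
    n ∈ (t.subst σ).vars ↔ ∃ m ∈ t.vars, n ∈ (σ m).vars := by
  induction t with
  | var k => simp [subst, vars]
  | op f as ih =>
    simp only [subst, vars, Set.mem_iUnion]
    constructor
    · rintro ⟨i, hi⟩
      rcases (ih i).1 hi with ⟨m, hm, hn⟩
      exact ⟨m, ⟨i, hm⟩, hn⟩
    · rintro ⟨m, ⟨i, hm⟩, hn⟩
      exact ⟨i, (ih i).2 ⟨m, hm, hn⟩⟩


/-! subst1 lemmas: `Fm.subst1 v u t` substitutes `u` for the variable `v` in `t`. -/

lemma subst1_var0 (u : Fm L) : Fm.subst1 0 u (Fm.var 0) = u := by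
  simp [subst1, subst]

lemma subst1_var_ne {v n : ℕ} (h : n ≠ v) (u : Fm L) :
    Fm.subst1 v u (Fm.var n) = Fm.var n := by
  simp [subst1, subst, h]

lemma subst1_op {v : ℕ} (u : Fm L) (f : L.Op) (as : Fin (L.ar f) → Fm L) :
    Fm.subst1 v u (Fm.op f as) = Fm.op f (fun i => Fm.subst1 v u (as i)) := rfl

lemma subst1_subst1 (c u e : Fm L) :
    Fm.subst1 0 e (Fm.subst1 0 u c) = Fm.subst1 0 (Fm.subst1 0 e u) c := by
  unfold subst1
  rw [subst_subst]
  apply subst_congr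
  intro n _
  by_cases hn : n = 0 <;> simp [hn, subst]

lemma subst1_of_not_mem {v : ℕ} {t : Fm L} (h : v ∉ t.vars) (u : Fm L) :
    Fm.subst1 v u t = t := by
  unfold subst1
  have h2 : t.subst (fun n => if n = v then u else Fm.var n) = t.subst Fm.var := by
    apply subst_congr
    intro n hn
    have : n ≠ v := fun e => h (e ▸ hn)
    simp [this]
  rw [h2, subst_id]

lemma vars_subst1_subset {t : Fm L} (h : t.vars ⊆ {0}) (u : Fm L) :
    (Fm.subst1 0 u t).vars ⊆ u.vars := by
  intro n hn
  rcases mem_vars_subst.1 hn with ⟨m, hm, hn2⟩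
  have hm0 : m = 0 := h hm
  subst hm0
  simpa using hn2

lemma mem_vars_subst1 {t : Fm L} (h0 : (0:ℕ) ∈ t.vars) {u : Fm L} {n : ℕ}
    (hn : n ∈ u.vars) : n ∈ (Fm.subst1 0 u t).vars := by
  exact mem_vars_subst.2 ⟨0, h0, by simpa using hn⟩

lemma size_le_size_subst1 {t : Fm L} (h : (0:ℕ) ∈ t.vars) (u : Fm L) :
    u.size ≤ (Fm.subst1 0 u t).size := by
  induction t with
  | var n =>
    have hn : n = 0 := by have := h; simp [vars] at this; omega
    subst hn; simp [subst1_var0]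
  | op f as ih =>
    rcases Set.mem_iUnion.1 h with ⟨i, hi⟩
    calc u.size ≤ (Fm.subst1 0 u (as i)).size := ih i hi
    _ ≤ _ := by
        rw [subst1_op]
        exact le_of_lt (size_arg_lt (fun i => Fm.subst1 0 u (as i)) i)

lemma subst1_inj {t : Fm L} (h : (0:ℕ) ∈ t.vars) {a b : Fm L}
    (he : Fm.subst1 0 a t = Fm.subst1 0 b t) : a = b := by
  induction t with
  | var n =>
    have hn : n = 0 := by have := h; simp [vars] at this; omega
    subst hn; simpa [subst1_var0] using he
  | op f as ih =>
    rcases Set.mem_iUnion.1 h with ⟨i, hi⟩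
    rw [subst1_op, subst1_op] at he
    exact ih i hi (congrFun (op_inj he) i)

lemma subst1_var_self (v : ℕ) (u : Fm L) : Fm.subst1 v u (Fm.var v) = u := by
  simp [subst1, subst]

def maxVar : Fm L → ℕ
  | .var n => n + 1
  | .op _ as => Finset.univ.sup (fun i => (as i).maxVar)

lemma lt_maxVar {n : ℕ} {t : Fm L} (h : n ∈ t.vars) : n < t.maxVar := by
  induction t with
  | var k => simp [vars] at h; subst h; simp [maxVar]
  | op f as ih =>
    rcases Set.mem_iUnion.1 h with ⟨i, hi⟩
    calc n < (as i).maxVar := ih i hi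
    _ ≤ _ := by
        exact Finset.le_sup (f := fun i => (as i).maxVar) (Finset.mem_univ i)

lemma subst1_subst {t : Fm L} (h : t.vars ⊆ {0}) (d : Fm L) (σ : ℕ → Fm L) :
    (Fm.subst1 0 d t).subst σ = Fm.subst1 0 (d.subst σ) t := by
  unfold Fm.subst1
  rw [Fm.subst_subst]
  apply subst_congr
  intro n hn
  have hn0 : n = 0 := h hn
  subst hn0
  simp

lemma vars_op_subset {f : L.Op} (as : Fin (L.ar f) → Fm L) (i) :
    (as i).vars ⊆ (Fm.op f as).vars := by
  intro n hn
  show n ∈ ⋃ i, (as i).vars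
  exact Set.mem_iUnion.2 ⟨i, hn⟩

lemma var_ne_op (n : ℕ) (f : L.Op) (as : Fin (L.ar f) → Fm L) :
    (Fm.var n : Fm L) ≠ Fm.op f as := by
  intro h; cases h


end Fm
/-! ### Logical equivalence machinery -/

namespace NGB
section LogicFacts
variable {L : Sig} (ℒ : Logic L)

lemma derivSingle (a : Fm L) : ℒ.deriv {a} a := ℒ.axm _ _ rfl

lemma cut1 {a b c : Fm L} (h1 : ℒ.deriv {a} b) (h2 : ℒ.deriv {b} c) :
    ℒ.deriv {a} c := by
  refine ℒ.cut {b} {a} c h2 ?_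
  intro γ hγ
  rw [Set.mem_singleton_iff] at hγ
  subst hγ; exact h1

lemma logEquiv_refl (a : Fm L) : LogEquiv ℒ a a :=
  fun χ v => ⟨derivSingle ℒ _, derivSingle ℒ _⟩

lemma logEquiv_symm {a b : Fm L} (h : LogEquiv ℒ a b) : LogEquiv ℒ b a :=
  fun χ v => ⟨(h χ v).2, (h χ v).1⟩

lemma logEquiv_trans {a b c : Fm L} (h1 : LogEquiv ℒ a b) (h2 : LogEquiv ℒ b c) :
    LogEquiv ℒ a c := by
  intro χ v
  exact ⟨cut1 ℒ (h1 χ v).1 (h2 χ v).1, cut1 ℒ (h2 χ v).2 (h1 χ v).2⟩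

lemma logEquiv_of_eq {a b : Fm L} (h : a = b) : LogEquiv ℒ a b := by
  subst h; exact logEquiv_refl ℒ a

lemma logEquiv_derives {a b : Fm L} (h : LogEquiv ℒ a b) : ℒ.deriv {a} b := by
  have := (h (Fm.var 0) 0).1
  simpa [Fm.subst1_var0] using this

lemma deriv_of_logEquiv_mem {Γ : Set (Fm L)} {d e : Fm L}
    (hd : ℒ.deriv Γ d) (h : LogEquiv ℒ d e) : ℒ.deriv Γ e := by
  refine ℒ.cut {d} Γ e (logEquiv_derives ℒ h) ?_
  intro x hx
  rw [Set.mem_singleton_iff] at hx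
  subst hx; exact hd

lemma deriv_subst_closed {Γ Δ : Set (Fm L)} {δ : Fm L} (h : ℒ.deriv Δ δ)
    (σ : ℕ → Fm L) (hall : ∀ d ∈ Δ, ℒ.deriv Γ (d.subst σ)) :
    ℒ.deriv Γ (δ.subst σ) := by
  refine ℒ.cut _ Γ _ (ℒ.substInv σ Δ δ h) ?_
  rintro x ⟨d, hd, rfl⟩
  exact hall d hd

lemma deriv_subst_ctx {φ ψ : Fm L}
    (hd : ∀ χ v, ℒ.deriv {Fm.subst1 v φ χ} (Fm.subst1 v ψ χ))
    (σ : ℕ → Fm L) (χ : Fm L) (v : ℕ) :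
    ℒ.deriv {Fm.subst1 v (φ.subst σ) χ} (Fm.subst1 v (ψ.subst σ) χ) := by
  classical
  set M := max (max χ.maxVar (max φ.maxVar ψ.maxVar)) (v+1) with hM
  have hvM : v < M := lt_of_lt_of_le (Nat.lt_succ_self v) (le_max_right _ _)
  have hχM : ∀ n ∈ χ.vars, n < M := fun n hn =>
    lt_of_lt_of_le (Fm.lt_maxVar hn) (le_trans (le_max_left _ _) (le_max_left _ _))
  have hφM : ∀ n ∈ φ.vars, n < M := fun n hn =>
    lt_of_lt_of_le (Fm.lt_maxVar hn)
      (le_trans (le_trans (le_max_left _ _) (le_max_right _ _)) (le_max_left _ _))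
  have hψM : ∀ n ∈ ψ.vars, n < M := fun n hn =>
    lt_of_lt_of_le (Fm.lt_maxVar hn)
      (le_trans (le_trans (le_max_right _ _) (le_max_right _ _)) (le_max_left _ _))
  set σ₁ : ℕ → Fm L := fun n => if n = v then .var v else .var (M + n) with hσ₁
  set σ₂ : ℕ → Fm L := fun k => if k < M then σ k else .var (k - M) with hσ₂
  have key : ∀ θ : Fm L, (∀ n ∈ θ.vars, n < M) →
      (Fm.subst1 v θ (χ.subst σ₁)).subst σ₂ = Fm.subst1 v (θ.subst σ) χ := by
    intro θ hθ
    unfold Fm.subst1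
    rw [Fm.subst_subst, Fm.subst_subst]
    apply Fm.subst_congr
    intro n hn
    by_cases hnv : n = v
    · subst hnv
      simp only [hσ₁, eq_self_iff_true, if_true, Fm.subst]
      apply Fm.subst_congr
      intro k hk
      simp only [hσ₂, if_pos (hθ k hk)]
    · have hMnv : ¬ (M + n = v) := by omega
      have hMn : ¬ (M + n < M) := by omega
      simp only [hσ₁, if_neg hnv, Fm.subst, if_neg hMnv, hσ₂, if_neg hMn,
        Nat.add_sub_cancel_left]
  have h0 := hd (χ.subst σ₁) v
  have h1 := ℒ.substInv σ₂ _ _ h0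
  rw [Set.image_singleton] at h1
  rw [key φ hφM, key ψ hψM] at h1
  exact h1

lemma logEquiv_subst {φ ψ : Fm L} (h : LogEquiv ℒ φ ψ) (σ : ℕ → Fm L) :
    LogEquiv ℒ (φ.subst σ) (ψ.subst σ) :=
  fun χ v => ⟨deriv_subst_ctx ℒ (fun χ v => (h χ v).1) σ χ v,
    deriv_subst_ctx ℒ (fun χ v => (h χ v).2) σ χ v⟩

lemma logEquiv_subst1_ctx {u u' : Fm L} (h : LogEquiv ℒ u u') (w : ℕ) (C : Fm L) :
    LogEquiv ℒ (Fm.subst1 w u C) (Fm.subst1 w u' C) := by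
  intro χ v
  classical
  set w' := max (max χ.maxVar C.maxVar) (v + 1) with hw'
  have hvw' : v < w' := lt_of_lt_of_le (Nat.lt_succ_self v) (le_max_right _ _)
  have hχw' : ∀ n ∈ χ.vars, n < w' := fun n hn =>
    lt_of_lt_of_le (Fm.lt_maxVar hn) (le_trans (le_max_left _ _) (le_max_left _ _))
  have hCw' : ∀ n ∈ C.vars, n < w' := fun n hn =>
    lt_of_lt_of_le (Fm.lt_maxVar hn) (le_trans (le_max_right _ _) (le_max_left _ _))
  set χ₁ := Fm.subst1 v (Fm.subst1 w (Fm.var w') C) χ with hχ₁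
  have key : ∀ θ : Fm L, Fm.subst1 w' θ χ₁ = Fm.subst1 v (Fm.subst1 w θ C) χ := by
    intro θ
    rw [hχ₁]
    unfold Fm.subst1
    rw [Fm.subst_subst]
    apply Fm.subst_congr
    intro n hn
    by_cases hnv : n = v
    · subst hnv
      simp only [eq_self_iff_true, if_true]
      rw [Fm.subst_subst]
      apply Fm.subst_congr
      intro k hk
      by_cases hkw : k = w
      · simp [hkw, Fm.subst]
      · have : k ≠ w' := by have := hCw' k hk; omega
        simp [hkw, Fm.subst, this]
    · have : n ≠ w' := by have := hχw' n hn; omega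
      simp [hnv, Fm.subst, this]
  have h2 := h χ₁ w'
  rw [key u, key u'] at h2
  exact h2

end LogicFacts
end NGB
namespace NGB
section OpCong
variable {L : Sig} (ℒ : Logic L)

lemma logEquiv_update {g : L.Op} (as : Fin (L.ar g) → Fm L) (i₀ : Fin (L.ar g))
    {b : Fm L} (h : LogEquiv ℒ (as i₀) b) :
    LogEquiv ℒ (Fm.op g as) (Fm.op g (Function.update as i₀ b)) := by
  classical
  set w' := (Finset.univ.sup (fun i => (as i).maxVar)) with hw'
  have hfresh : ∀ i, w' ∉ (as i).vars := by
    intro i hmem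
    have h1 := Fm.lt_maxVar hmem
    have h2 : (as i).maxVar ≤ w' :=
      Finset.le_sup (f := fun i => (as i).maxVar) (Finset.mem_univ i)
    omega
  set C := Fm.op g (Function.update as i₀ (Fm.var w')) with hC
  have key : ∀ θ : Fm L,
      Fm.subst1 w' θ C = Fm.op g (Function.update as i₀ θ) := by
    intro θ
    rw [hC, Fm.subst1_op]
    congr 1
    funext i
    by_cases hi : i = i₀
    · subst hi
      rw [Function.update_self, Function.update_self, Fm.subst1_var_self]
    · rw [Function.update_of_ne hi, Function.update_of_ne hi]
      exact Fm.subst1_of_not_mem (hfresh i) θ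
  have h2 := logEquiv_subst1_ctx ℒ h w' C
  rw [key (as i₀), key b, Function.update_eq_self] at h2
  exact h2

lemma logEquiv_op {g : L.Op} (as bs : Fin (L.ar g) → Fm L)
    (h : ∀ i, LogEquiv ℒ (as i) (bs i)) :
    LogEquiv ℒ (Fm.op g as) (Fm.op g bs) := by
  classical
  have main : ∀ k : ℕ, k ≤ L.ar g → LogEquiv ℒ (Fm.op g as)
      (Fm.op g (fun i => if i.val < k then bs i else as i)) := by
    intro k
    induction k with
    | zero =>
      intro _
      have e : (fun i : Fin (L.ar g) => if i.val < 0 then bs i else as i) = as := by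
        funext i; simp
      rw [e]; exact logEquiv_refl ℒ _
    | succ k ih =>
      intro hk
      have hk' : k ≤ L.ar g := Nat.le_of_succ_le hk
      have hkk : k < L.ar g := hk
      set i₀ : Fin (L.ar g) := ⟨k, hkk⟩ with hi₀
      set mixk : Fin (L.ar g) → Fm L := fun i => if i.val < k then bs i else as i with hmixk
      have e0 : mixk i₀ = as i₀ := by simp [hmixk, hi₀]
      have hstep : LogEquiv ℒ (mixk i₀) (bs i₀) := by rw [e0]; exact h i₀
      have step := logEquiv_update ℒ mixk i₀ hstep
      have e1 : Function.update mixk i₀ (bs i₀)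
          = (fun i : Fin (L.ar g) => if i.val < k + 1 then bs i else as i) := by
        funext i
        by_cases hi : i = i₀
        · subst hi
          rw [Function.update_self]
          simp [hi₀]
        · rw [Function.update_of_ne hi]
          have hne : i.val ≠ k := by
            intro hv
            apply hi
            apply Fin.ext
            simp [hi₀, hv]
          by_cases hlt : i.val < k
          · have : i.val < k + 1 := by omega
            simp [hmixk, hlt, this]
          · have : ¬ (i.val < k + 1) := by omega
            simp [hmixk, hlt, this]
      rw [e1] at step
      exact logEquiv_trans ℒ (ih hk') step
  have fin := main (L.ar g) le_rfl
  have e : (fun i : Fin (L.ar g) => if i.val < L.ar g then bs i else as i) = bs := by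
    funext i; simp [i.isLt]
  rw [e] at fin
  exact fin

end OpCong
end NGB
namespace NGB

/-- A pack of two "context operations" on formulas with suitable
non-overlap properties. -/
structure DEPack (L : Sig) where
  D : Fm L → Fm L
  E : Fm L → Fm L
  D_inj : ∀ {u v}, D u = D v → u = v
  E_inj : ∀ {u v}, E u = E v → u = v
  D_ne_E : ∀ u v, D u ≠ E v
  D_ne_var : ∀ u n, D u ≠ Fm.var n
  E_ne_var : ∀ u n, E u ≠ Fm.var n
  D_subst : ∀ u σ, (D u).subst σ = D (u.subst σ)
  E_subst : ∀ u σ, (E u).subst σ = E (u.subst σ)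
  D_size : ∀ u, u.size < (D u).size
  E_size : ∀ u, u.size < (E u).size
  D_vars : ∀ u, (D u).vars = u.vars
  E_vars : ∀ u, (E u).vars = u.vars
  D_match : ∀ c ρ V, Fm.subst1 0 ρ c = D V →
    c = Fm.var 0 ∨ ∃ c', c'.size < c.size ∧ Fm.subst1 0 ρ c' = V
  E_match : ∀ c ρ V, Fm.subst1 0 ρ c = E V →
    c = Fm.var 0 ∨ ∃ c', c'.size < c.size ∧ Fm.subst1 0 ρ c' = V
  N_D : ∀ (R' N' : Fm L → Fm L),
    (∀ g as, N' (Fm.op g as) = R' (Fm.op g (fun i => N' (as i)))) →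
    ∀ u, N' (D u) = R' (D (N' u))
  N_E : ∀ (R' N' : Fm L → Fm L),
    (∀ g as, N' (Fm.op g as) = R' (Fm.op g (fun i => N' (as i)))) →
    (∀ u, R' (D u) = D u) →
    ∀ u, N' (E u) = R' (E (N' u))

namespace DEPack

variable {L : Sig} (P : DEPack L)

attribute [local instance] Classical.propDecidable

/-- Iterated `D`. -/
def Dk (k : ℕ) (u : Fm L) : Fm L := P.D^[k] u

lemma Dk_zero (u : Fm L) : P.Dk 0 u = u := rfl

lemma Dk_succ (k : ℕ) (u : Fm L) : P.Dk (k+1) u = P.D (P.Dk k u) :=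
  Function.iterate_succ_apply' P.D k u

lemma Dk_add (k l : ℕ) (u : Fm L) : P.Dk (k + l) u = P.Dk k (P.Dk l u) :=
  Function.iterate_add_apply P.D k l u

lemma Dk_inj {k : ℕ} {u v : Fm L} (h : P.Dk k u = P.Dk k v) : u = v := by
  induction k with
  | zero => exact h
  | succ k ih =>
    rw [P.Dk_succ, P.Dk_succ] at h
    exact ih (P.D_inj h)

lemma Dk_subst (k : ℕ) (u : Fm L) (σ : ℕ → Fm L) :
    (P.Dk k u).subst σ = P.Dk k (u.subst σ) := by
  induction k with
  | zero => rfl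
  | succ k ih => rw [P.Dk_succ, P.D_subst, ih, P.Dk_succ]

lemma Dk_vars (k : ℕ) (u : Fm L) : (P.Dk k u).vars = u.vars := by
  induction k with
  | zero => rfl
  | succ k ih => rw [P.Dk_succ, P.D_vars, ih]

/-- `D`-tower depth of a formula. -/
noncomputable def dd (t : Fm L) : ℕ :=
  if h : ∃ u, t = P.D u then dd h.choose + 1 else 0
termination_by t.size
decreasing_by
  exact lt_of_lt_of_le (P.D_size h.choose)
    (le_of_eq (congrArg Fm.size h.choose_spec.symm))

lemma dd_D (u : Fm L) : P.dd (P.D u) = P.dd u + 1 := by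
  rw [dd]
  have h : ∃ v, P.D u = P.D v := ⟨u, rfl⟩
  rw [dif_pos h]
  have : h.choose = u := P.D_inj h.choose_spec.symm
  rw [this]

lemma dd_of_not {t : Fm L} (h : ∀ u, t ≠ P.D u) : P.dd t = 0 := by
  rw [dd, dif_neg]
  rintro ⟨u, hu⟩
  exact h u hu

lemma dd_E (u : Fm L) : P.dd (P.E u) = 0 :=
  P.dd_of_not (fun v hv => P.D_ne_E v u hv.symm)

lemma dd_var (n : ℕ) : P.dd (Fm.var n : Fm L) = 0 :=
  P.dd_of_not (fun v hv => P.D_ne_var v n hv.symm)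

lemma dd_Dk (k : ℕ) (u : Fm L) : P.dd (P.Dk k u) = k + P.dd u := by
  induction k with
  | zero => simp [Dk_zero]
  | succ k ih => rw [P.Dk_succ, P.dd_D, ih]; omega

/-- `dd` of a substitution instance is bounded by the size of the template,
provided the substituted formula has no `D`-tower at its root. -/
lemma dd_subst1_le (c ρ : Fm L) (hρ : P.dd ρ = 0) :
    P.dd (Fm.subst1 0 ρ c) ≤ c.size := by
  have H : ∀ n (c : Fm L), c.size ≤ n → P.dd (Fm.subst1 0 ρ c) ≤ c.size := by
    intro n
    induction n with
    | zero =>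
      intro c hc
      have := Fm.size_pos c
      omega
    | succ n ih =>
      intro c hc
      by_cases h : ∃ u, Fm.subst1 0 ρ c = P.D u
      · obtain ⟨u, hu⟩ := h
        rcases P.D_match c ρ u hu with h0 | ⟨c', hsz, hc'⟩
        · subst h0
          rw [Fm.subst1_var0] at hu ⊢
          omega
        · have hdd : P.dd (Fm.subst1 0 ρ c) = P.dd u + 1 := by rw [hu, P.dd_D]
          have h2 : P.dd (Fm.subst1 0 ρ c') ≤ c'.size := ih c' (by omega)
          rw [hc'] at h2
          omega
      · push_neg at h
        have : P.dd (Fm.subst1 0 ρ c) = 0 := P.dd_of_not h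
        omega
  exact H c.size c le_rfl

end DEPack
end NGB
namespace NGB

/-- The full setup: a pack, a logic, a theory, and a pair of distinct logically
equivalent formulas in the variable `x₀`. -/
structure Setup (L : Sig) where
  P : DEPack L
  ℒ : Logic L
  Γ : Set (Fm L)
  φ : Fm L
  ψ : Fm L
  hne : φ ≠ ψ
  hvφ : φ.vars ⊆ {0}
  hvψ : ψ.vars ⊆ {0}
  h0ψ : (0:ℕ) ∈ ψ.vars
  heq : LogEquiv ℒ φ ψ

namespace Setup

variable {L : Sig} (S : Setup L)

attribute [local instance] Classical.propDecidable

def m : ℕ := S.φ.size + S.ψ.size + 2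

lemma size_φ_lt_m : S.φ.size < S.m := by unfold m; omega
lemma size_ψ_lt_m : S.ψ.size < S.m := by unfold m; omega
lemma m_pos : 0 < S.m := by unfold m; omega

/-- `r̂ = E(D^{2m}(x₀))`, the "insulating" context. -/
def rhat : Fm L := S.P.E (S.P.Dk (2 * S.m) (Fm.var 0))

/-- `r̂(e)`. -/
def rApp (e : Fm L) : Fm L := S.P.E (S.P.Dk (2 * S.m) e)

lemma rhat_subst1 (e : Fm L) : Fm.subst1 0 e S.rhat = S.rApp e := by
  unfold rhat rApp Fm.subst1
  rw [S.P.E_subst, S.P.Dk_subst]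
  simp [Fm.subst]

lemma dd_rApp_zero (e : Fm L) : S.P.dd (S.rApp e) = 0 := S.P.dd_E _

def phi1 : Fm L := Fm.subst1 0 S.rhat S.φ
def psi1 : Fm L := Fm.subst1 0 S.rhat S.ψ

lemma phi1_subst1 (e : Fm L) :
    Fm.subst1 0 e S.phi1 = Fm.subst1 0 (S.rApp e) S.φ := by
  unfold phi1
  rw [Fm.subst1_subst1, S.rhat_subst1]

lemma psi1_subst1 (e : Fm L) :
    Fm.subst1 0 e S.psi1 = Fm.subst1 0 (S.rApp e) S.ψ := by
  unfold psi1
  rw [Fm.subst1_subst1, S.rhat_subst1]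

/-- The two equation sides: `A = E(D^m(φ₁))`, `B = E(D^m(ψ₁))`. -/
def Atm : Fm L := S.P.E (S.P.Dk S.m S.phi1)
def Btm : Fm L := S.P.E (S.P.Dk S.m S.psi1)

lemma Atm_subst1 (e : Fm L) :
    Fm.subst1 0 e S.Atm = S.P.E (S.P.Dk S.m (Fm.subst1 0 e S.phi1)) := by
  unfold Atm Fm.subst1
  rw [S.P.E_subst, S.P.Dk_subst]

lemma Btm_subst1 (e : Fm L) :
    Fm.subst1 0 e S.Btm = S.P.E (S.P.Dk S.m (Fm.subst1 0 e S.psi1)) := by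
  unfold Btm Fm.subst1
  rw [S.P.E_subst, S.P.Dk_subst]

lemma vars_rhat : S.rhat.vars = {0} := by
  unfold rhat
  rw [S.P.E_vars, S.P.Dk_vars]
  rfl

lemma vars_phi1 : S.phi1.vars ⊆ {0} := by
  intro n hn
  unfold phi1 at hn
  rcases Fm.mem_vars_subst.1 hn with ⟨k, hk, hn2⟩
  by_cases hk0 : k = 0
  · subst hk0
    rw [if_pos rfl, S.vars_rhat] at hn2
    exact hn2
  · have := S.hvφ hk
    simp at this
    omega

lemma vars_psi1 : S.psi1.vars ⊆ {0} := by
  intro n hn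
  unfold psi1 at hn
  rcases Fm.mem_vars_subst.1 hn with ⟨k, hk, hn2⟩
  by_cases hk0 : k = 0
  · subst hk0
    rw [if_pos rfl, S.vars_rhat] at hn2
    exact hn2
  · have := S.hvψ hk
    simp at this
    omega

lemma mem0_psi1 : (0:ℕ) ∈ S.psi1.vars := by
  unfold psi1
  apply Fm.mem_vars_subst1 S.h0ψ
  rw [S.vars_rhat]; rfl

lemma vars_Atm : S.Atm.vars ⊆ {0} := by
  unfold Atm
  rw [S.P.E_vars, S.P.Dk_vars]
  exact S.vars_phi1

lemma vars_Btm : S.Btm.vars ⊆ {0} := by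
  unfold Btm
  rw [S.P.E_vars, S.P.Dk_vars]
  exact S.vars_psi1

lemma mem0_Btm : (0:ℕ) ∈ S.Btm.vars := by
  unfold Btm
  rw [S.P.E_vars, S.P.Dk_vars]
  exact S.mem0_psi1

lemma Btm_subst1_inj {a b : Fm L} (h : Fm.subst1 0 a S.Btm = Fm.subst1 0 b S.Btm) :
    a = b := Fm.subst1_inj S.mem0_Btm h

/-- The root collapse function. -/
noncomputable def R (t : Fm L) : Fm L :=
  if h : ∃ a, S.ℒ.deriv S.Γ a ∧ t = Fm.subst1 0 a S.Btm
  then Fm.subst1 0 h.choose S.Atm else t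

lemma R_fire {a : Fm L} (ha : S.ℒ.deriv S.Γ a) :
    S.R (Fm.subst1 0 a S.Btm) = Fm.subst1 0 a S.Atm := by
  unfold R
  have h : ∃ b, S.ℒ.deriv S.Γ b ∧ Fm.subst1 0 a S.Btm = Fm.subst1 0 b S.Btm :=
    ⟨a, ha, rfl⟩
  rw [dif_pos h]
  have := S.Btm_subst1_inj h.choose_spec.2
  rw [← this]

lemma R_nofire {t : Fm L} (h : ∀ a, S.ℒ.deriv S.Γ a → t ≠ Fm.subst1 0 a S.Btm) :
    S.R t = t := by
  unfold R
  rw [dif_neg]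
  rintro ⟨a, ha, rfl⟩
  exact h a ha rfl

/-- The normalization function. -/
noncomputable def N : Fm L → Fm L
  | .var n => .var n
  | .op g as => S.R (Fm.op g (fun i => N (as i)))

lemma N_var (n : ℕ) : S.N (Fm.var n) = Fm.var n := rfl

lemma N_op (g : L.Op) (as : Fin (L.ar g) → Fm L) :
    S.N (Fm.op g as) = S.R (Fm.op g (fun i => S.N (as i))) := rfl

end Setup
end NGB
namespace NGB
namespace Setup

variable {L : Sig} (S : Setup L)

attribute [local instance] Classical.propDecidable

lemma dd_kill {c V : Fm L} {k : ℕ} (hk : S.m ≤ k) (ρ : Fm L) (hρ : S.P.dd ρ = 0)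
    (hsz : c.size < S.m) (h : Fm.subst1 0 ρ c = S.P.Dk k V) : False := by
  have h1 : S.P.dd (Fm.subst1 0 ρ c) ≤ c.size := S.P.dd_subst1_le c ρ hρ
  rw [h, S.P.dd_Dk] at h1
  omega

lemma unif : ∀ (n : ℕ) (c c' e a : Fm L), c.size ≤ n → c.size < S.m → c'.size < S.m →
    Fm.subst1 0 (S.rApp e) c = Fm.subst1 0 (S.rApp a) c' →
    c = c' ∧ ((0:ℕ) ∈ c.vars → e = a) := by
  intro n
  induction n with
  | zero =>
    intro c _ _ _ hc _ _ _
    have := Fm.size_pos c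
    omega
  | succ n ih =>
    intro c c' e a hc hcm hcm' heq2
    cases c with
    | var k =>
      by_cases hk : k = 0
      · subst hk
        rw [Fm.subst1_var0] at heq2
        cases c' with
        | var k' =>
          by_cases hk' : k' = 0
          · subst hk'
            rw [Fm.subst1_var0] at heq2
            unfold rApp at heq2
            have h2 := S.P.Dk_inj (S.P.E_inj heq2)
            exact ⟨rfl, fun _ => h2⟩
          · rw [Fm.subst1_var_ne hk'] at heq2
            exact absurd heq2 (S.P.E_ne_var _ _)
        | op j' cs' =>
          have heq3 : Fm.subst1 0 (S.rApp a) (Fm.op j' cs') = S.P.E (S.P.Dk (2*S.m) e) := by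
            rw [← heq2]; rfl
          rcases S.P.E_match (Fm.op j' cs') (S.rApp a) (S.P.Dk (2*S.m) e) heq3 with h0 | ⟨c'', hsz'', hc''⟩
          · exact absurd h0.symm (Fm.var_ne_op _ _ _)
          · exact absurd hc'' (fun hh =>
              S.dd_kill (by omega) (S.rApp a) (S.dd_rApp_zero a)
                (lt_trans hsz'' hcm') hh)
      · rw [Fm.subst1_var_ne hk] at heq2
        cases c' with
        | var k' =>
          by_cases hk' : k' = 0
          · subst hk'
            rw [Fm.subst1_var0] at heq2
            exact absurd heq2.symm (S.P.E_ne_var _ _)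
          · rw [Fm.subst1_var_ne hk'] at heq2
            injection heq2 with hkk
            subst hkk
            refine ⟨rfl, fun h0 => ?_⟩
            exfalso
            have h0' : (0:ℕ) = k := h0
            omega
        | op j' cs' =>
          rw [Fm.subst1_op] at heq2
          exact absurd heq2 (Fm.var_ne_op _ _ _)
    | op j cs =>
      cases c' with
      | var k' =>
        by_cases hk' : k' = 0
        · subst hk'
          rw [Fm.subst1_var0] at heq2
          have heq3 : Fm.subst1 0 (S.rApp e) (Fm.op j cs) = S.P.E (S.P.Dk (2*S.m) a) := by
            rw [heq2]; rfl
          rcases S.P.E_match (Fm.op j cs) (S.rApp e) (S.P.Dk (2*S.m) a) heq3 with h0 | ⟨c'', hsz'', hc''⟩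
          · exact absurd h0.symm (Fm.var_ne_op _ _ _)
          · exact absurd hc'' (fun hh =>
              S.dd_kill (by omega) (S.rApp e) (S.dd_rApp_zero e)
                (lt_trans hsz'' hcm) hh)
        · rw [Fm.subst1_var_ne hk', Fm.subst1_op] at heq2
          exact absurd heq2.symm (Fm.var_ne_op _ _ _)
      | op j' cs' =>
        rw [Fm.subst1_op, Fm.subst1_op] at heq2
        injection heq2 with hj hargs
        subst hj
        have hargs' := eq_of_heq hargs
        have hpt : ∀ i, cs i = cs' i ∧ ((0:ℕ) ∈ (cs i).vars → e = a) := by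
          intro i
          apply ih (cs i) (cs' i) e a
          · have := Fm.size_arg_lt cs i; omega
          · exact lt_trans (Fm.size_arg_lt cs i) hcm
          · exact lt_trans (Fm.size_arg_lt cs' i) hcm'
          · exact congrFun hargs' i
        constructor
        · congr 1
          funext i
          exact (hpt i).1
        · intro h0
          rcases Set.mem_iUnion.1 h0 with ⟨i, hi⟩
          exact (hpt i).2 hi

lemma unif_main {e a : Fm L} :
    Fm.subst1 0 (S.rApp e) S.φ ≠ Fm.subst1 0 (S.rApp a) S.ψ := fun h =>
  S.hne ((S.unif S.φ.size S.φ S.ψ e a le_rfl S.size_φ_lt_m S.size_ψ_lt_m h).1)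

lemma nofire_A (e a : Fm L) : Fm.subst1 0 e S.Atm ≠ Fm.subst1 0 a S.Btm := by
  intro h
  rw [S.Atm_subst1, S.Btm_subst1] at h
  have h2 := S.P.Dk_inj (S.P.E_inj h)
  rw [S.phi1_subst1, S.psi1_subst1] at h2
  exact S.unif_main h2

lemma nofire_D (w a : Fm L) : S.P.D w ≠ Fm.subst1 0 a S.Btm := by
  intro h
  rw [S.Btm_subst1] at h
  exact S.P.D_ne_E _ _ h

lemma nofire_rApp (e a : Fm L) : S.rApp e ≠ Fm.subst1 0 a S.Btm := by
  intro h
  rw [S.Btm_subst1] at h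
  unfold rApp at h
  have h2 := S.P.E_inj h
  have h2m : 2 * S.m = S.m + S.m := by omega
  rw [h2m, S.P.Dk_add] at h2
  have h3 := S.P.Dk_inj h2
  have h4 : S.P.dd (Fm.subst1 0 a S.psi1) ≤ S.ψ.size := by
    rw [S.psi1_subst1]
    exact S.P.dd_subst1_le _ _ (S.dd_rApp_zero a)
  rw [← h3, S.P.dd_Dk] at h4
  have := S.size_ψ_lt_m
  omega

lemma nofire_subst {c : Fm L} (ρ : Fm L) (hop : ∀ n, c ≠ Fm.var n)
    (hsz : c.size < S.m) (hρ : S.P.dd ρ = 0) (a : Fm L) :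
    Fm.subst1 0 ρ c ≠ Fm.subst1 0 a S.Btm := by
  intro h
  rw [S.Btm_subst1] at h
  rcases S.P.E_match c ρ _ h with h0 | ⟨c'', hsz'', hc''⟩
  · exact hop 0 h0
  · exact S.dd_kill le_rfl ρ hρ (lt_trans hsz'' hsz) hc''

lemma R_D_fix (u : Fm L) : S.R (S.P.D u) = S.P.D u :=
  S.R_nofire (fun a _ h => S.nofire_D u a h)

lemma N_D (u : Fm L) : S.N (S.P.D u) = S.P.D (S.N u) := by
  have h := S.P.N_D S.R S.N S.N_op u
  rw [h, S.R_D_fix]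

lemma N_Dk (k : ℕ) (u : Fm L) : S.N (S.P.Dk k u) = S.P.Dk k (S.N u) := by
  induction k with
  | zero => rfl
  | succ k ih => rw [S.P.Dk_succ, S.N_D, ih, ← S.P.Dk_succ]

lemma N_E (u : Fm L) : S.N (S.P.E u) = S.R (S.P.E (S.N u)) :=
  S.P.N_E S.R S.N S.N_op S.R_D_fix u

lemma N_rApp (e : Fm L) : S.N (S.rApp e) = S.rApp (S.N e) := by
  unfold rApp
  rw [S.N_E, S.N_Dk]
  exact S.R_nofire (fun a _ h => S.nofire_rApp (S.N e) a (by rw [← h]; rfl))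

lemma N_subst_c (e : Fm L) : ∀ (c : Fm L), c.vars ⊆ {0} → c.size < S.m →
    S.N (Fm.subst1 0 (S.rApp e) c) = Fm.subst1 0 (S.rApp (S.N e)) c := by
  intro c
  induction c with
  | var k =>
    intro hv _
    by_cases hk : k = 0
    · subst hk
      rw [Fm.subst1_var0, Fm.subst1_var0]
      exact S.N_rApp e
    · exfalso
      have hmem : k ∈ (Fm.var k : Fm L).vars := by
        show k ∈ ({k} : Set ℕ); rfl
      have := hv hmem
      simp at this
      exact hk this
  | op j cs ih =>
    intro hv hsz
    rw [Fm.subst1_op, Fm.subst1_op, S.N_op]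
    have hstep : (fun i => S.N (Fm.subst1 0 (S.rApp e) (cs i)))
        = (fun i => Fm.subst1 0 (S.rApp (S.N e)) (cs i)) := by
      funext i
      apply ih i
      · exact fun n hn => hv (Fm.vars_op_subset cs i hn)
      · exact lt_trans (Fm.size_arg_lt cs i) hsz
    rw [hstep]
    exact S.R_nofire (fun a _ h =>
      S.nofire_subst (S.rApp (S.N e)) (fun n hh => Fm.var_ne_op n j cs hh.symm)
        hsz (S.dd_rApp_zero _) a h)

lemma N_phi1 (e : Fm L) : S.N (Fm.subst1 0 e S.phi1) = Fm.subst1 0 (S.N e) S.phi1 := by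
  rw [S.phi1_subst1, S.phi1_subst1]
  exact S.N_subst_c e S.φ S.hvφ S.size_φ_lt_m

lemma N_psi1 (e : Fm L) : S.N (Fm.subst1 0 e S.psi1) = Fm.subst1 0 (S.N e) S.psi1 := by
  rw [S.psi1_subst1, S.psi1_subst1]
  exact S.N_subst_c e S.ψ S.hvψ S.size_ψ_lt_m

lemma N_Atm (e : Fm L) : S.N (Fm.subst1 0 e S.Atm) = Fm.subst1 0 (S.N e) S.Atm := by
  rw [S.Atm_subst1, S.N_E, S.N_Dk, S.N_phi1, ← S.Atm_subst1]
  exact S.R_nofire (fun a _ h => S.nofire_A (S.N e) a h)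

lemma N_Btm (e : Fm L) : S.N (Fm.subst1 0 e S.Btm) =
    if S.ℒ.deriv S.Γ (S.N e) then Fm.subst1 0 (S.N e) S.Atm
    else Fm.subst1 0 (S.N e) S.Btm := by
  rw [S.Btm_subst1, S.N_E, S.N_Dk, S.N_psi1, ← S.Btm_subst1]
  by_cases hd : S.ℒ.deriv S.Γ (S.N e)
  · rw [if_pos hd]
    exact S.R_fire hd
  · rw [if_neg hd]
    apply S.R_nofire
    intro a ha h
    have h2 := S.Btm_subst1_inj h
    rw [← h2] at ha
    exact hd ha

lemma ctx_subst1_EDk (k : ℕ) (u : Fm L) :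
    Fm.subst1 0 u (S.P.E (S.P.Dk k (Fm.var 0))) = S.P.E (S.P.Dk k u) := by
  unfold Fm.subst1
  rw [S.P.E_subst, S.P.Dk_subst]
  simp [Fm.subst]

lemma pairEquiv (a : Fm L) :
    LogEquiv S.ℒ (Fm.subst1 0 a S.Atm) (Fm.subst1 0 a S.Btm) := by
  have h1 : LogEquiv S.ℒ (Fm.subst1 0 (S.rApp a) S.φ) (Fm.subst1 0 (S.rApp a) S.ψ) :=
    logEquiv_subst S.ℒ S.heq (fun n => if n = 0 then S.rApp a else Fm.var n)
  have h2 := logEquiv_subst1_ctx S.ℒ h1 0 (S.P.E (S.P.Dk S.m (Fm.var 0)))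
  rw [S.ctx_subst1_EDk, S.ctx_subst1_EDk] at h2
  rw [S.Atm_subst1, S.Btm_subst1, S.phi1_subst1, S.psi1_subst1]
  exact h2

lemma N_logEquiv : ∀ t : Fm L, LogEquiv S.ℒ t (S.N t) := by
  intro t
  induction t with
  | var n => exact logEquiv_refl _ _
  | op g as ih =>
    rw [S.N_op]
    have h1 : LogEquiv S.ℒ (Fm.op g as) (Fm.op g (fun i => S.N (as i))) :=
      logEquiv_op S.ℒ as _ ih
    refine logEquiv_trans S.ℒ h1 ?_
    unfold R
    split
    next h =>
      have hs := h.choose_spec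
      have hpe := logEquiv_symm _ (S.pairEquiv h.choose)
      rw [← hs.2] at hpe
      exact hpe
    next => exact logEquiv_refl _ _

lemma deriv_N_iff (e : Fm L) : S.ℒ.deriv S.Γ (S.N e) ↔ S.ℒ.deriv S.Γ e := by
  constructor
  · intro h
    exact deriv_of_logEquiv_mem S.ℒ h (logEquiv_symm _ (S.N_logEquiv e))
  · intro h
    exact deriv_of_logEquiv_mem S.ℒ h (S.N_logEquiv e)

lemma N3 (e : Fm L) :
    (S.N (Fm.subst1 0 e S.Atm) = S.N (Fm.subst1 0 e S.Btm)) ↔ S.ℒ.deriv S.Γ e := by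
  rw [S.N_Atm, S.N_Btm]
  by_cases hd : S.ℒ.deriv S.Γ (S.N e)
  · rw [if_pos hd]
    constructor
    · intro _
      exact (S.deriv_N_iff e).1 hd
    · intro _
      rfl
  · rw [if_neg hd]
    constructor
    · intro h
      exact absurd h (S.nofire_A _ _)
    · intro h
      exact absurd ((S.deriv_N_iff e).2 h) hd

lemma N_subst_pointwise {σ σ' : ℕ → Fm L} (h : ∀ n, S.N (σ n) = S.N (σ' n)) :
    ∀ t : Fm L, S.N (t.subst σ) = S.N (t.subst σ') := by
  intro t
  induction t with
  | var n => exact h n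
  | op g as ih =>
    show S.N (Fm.op g (fun i => (as i).subst σ)) = S.N (Fm.op g (fun i => (as i).subst σ'))
    rw [S.N_op, S.N_op]
    congr 1
    congr 1
    funext i
    exact ih i

lemma N_op_congr {g : L.Op} {xs ys : Fin (L.ar g) → Fm L}
    (h : ∀ i, S.N (xs i) = S.N (ys i)) :
    S.N (Fm.op g xs) = S.N (Fm.op g ys) := by
  rw [S.N_op, S.N_op]
  congr 1
  congr 1
  funext i
  exact h i

end Setup
end NGB
namespace NGB

open Setup in
theorem hasAlgSem_of_pack {L : Sig} (P : DEPack L) (ℒ : Logic L) (φ ψ : Fm L)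
    (hne : φ ≠ ψ) (hvφ : φ.vars ⊆ {0}) (hvψ : ψ.vars ⊆ {0})
    (h0ψ : (0:ℕ) ∈ ψ.vars) (heq : LogEquiv ℒ φ ψ) : HasAlgSem ℒ := by
  classical
  set mk : Set (Fm L) → Setup L := fun Γ => ⟨P, ℒ, Γ, φ, ψ, hne, hvφ, hvψ, h0ψ, heq⟩
    with hmk
  set A := (mk ∅).Atm with hA
  set B := (mk ∅).Btm with hB
  have hAeq : ∀ Γ, (mk Γ).Atm = A := fun Γ => rfl
  have hBeq : ∀ Γ, (mk Γ).Btm = B := fun Γ => rfl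
  set τ : Set (Fm L × Fm L) := {(A, B)} with hτ
  set K : Set (Alg L) := {Aa | ∀ (Δ : Set (Fm L)) (δ : Fm L), ℒ.deriv Δ δ →
    ∀ v : ℕ → Aa.carrier,
      (∀ d ∈ Δ, (Fm.subst1 0 d A).eval Aa v = (Fm.subst1 0 d B).eval Aa v) →
      (Fm.subst1 0 δ A).eval Aa v = (Fm.subst1 0 δ B).eval Aa v} with hK
  refine ⟨τ, K, ?_, ?_⟩
  · rintro e he
    rw [hτ, Set.mem_singleton_iff] at he
    subst he
    exact ⟨(mk ∅).vars_Atm, (mk ∅).vars_Btm⟩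
  · intro Γ γ
    constructor
    · -- soundness direction
      rintro hd e he
      rcases he with ⟨p, hp, rfl⟩
      rw [hτ, Set.mem_singleton_iff] at hp
      subst hp
      intro Aa hAa v hprem
      refine hAa Γ γ hd v ?_
      intro d hdΓ
      have hmem2 : ((Fm.subst1 0 d A, Fm.subst1 0 d B) : Fm L × Fm L)
          ∈ tauAppSet τ Γ := by
        apply Set.mem_biUnion hdΓ
        exact ⟨(A, B), rfl, rfl⟩
      exact hprem _ hmem2
    · -- completeness direction
      intro hsem
      by_contra hnd
      set S := mk Γ with hS
      have hSA : S.Atm = A := hAeq Γ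
      have hSB : S.Btm = B := hBeq Γ
      set sd : Setoid (Fm L) :=
        ⟨fun a b => S.N a = S.N b,
          ⟨fun _ => rfl, fun h => h.symm, fun h1 h2 => h1.trans h2⟩⟩ with hsd
      set Aa : Alg L :=
        ⟨Quotient sd, fun g cs => Quotient.mk sd (Fm.op g (fun i => (cs i).out))⟩
        with hAadef
      have hsound : ∀ {x y : Fm L}, S.N x = S.N y →
          Quotient.mk sd x = Quotient.mk sd y := fun h => Quotient.sound h
      have hexact : ∀ {x y : Fm L}, Quotient.mk sd x = Quotient.mk sd y →
          S.N x = S.N y := fun h => Quotient.exact h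
      have hout : ∀ x : Fm L, S.N ((Quotient.mk sd x).out) = S.N x :=
        fun x => Quotient.mk_out x
      have heval : ∀ (v : ℕ → Aa.carrier) (t : Fm L),
          t.eval Aa v = Quotient.mk sd (t.subst (fun n => (v n).out)) := by
        intro v t
        induction t with
        | var n =>
          show v n = _
          exact (Quotient.out_eq (v n)).symm
        | op g as ih =>
          show Aa.interp g (fun i => (as i).eval Aa v) = _
          show Quotient.mk sd (Fm.op g (fun i => ((as i).eval Aa v).out)) = _
          apply hsound
          apply S.N_op_congr
          intro i
          rw [ih i]
          exact hout _
      have hkey : ∀ (v : ℕ → Aa.carrier) (d : Fm L),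
          ((Fm.subst1 0 d A).eval Aa v = (Fm.subst1 0 d B).eval Aa v) ↔
            ℒ.deriv Γ (d.subst (fun n => (v n).out)) := by
        intro v d
        rw [heval, heval]
        rw [Fm.subst1_subst (hSA ▸ S.vars_Atm) d, Fm.subst1_subst (hSB ▸ S.vars_Btm) d]
        constructor
        · intro h
          exact (S.N3 _).1 (by rw [← hSA, ← hSB] at h; exact hexact h)
        · intro h
          rw [← hSA, ← hSB]
          exact hsound ((S.N3 _).2 h)
      have hmemK : Aa ∈ K := by
        intro Δ δ hΔδ v hprem
        rw [hkey]
        apply deriv_subst_closed ℒ hΔδ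
        intro d hd
        exact (hkey v d).1 (hprem d hd)
      -- the countermodel valuation
      set v₀ : ℕ → Aa.carrier := fun n => Quotient.mk sd (Fm.var n) with hv₀
      have hNv₀ : ∀ t : Fm L, S.N (t.subst (fun n => (v₀ n).out)) = S.N t := by
        intro t
        have h1 : S.N (t.subst (fun n => (v₀ n).out)) = S.N (t.subst Fm.var) := by
          apply S.N_subst_pointwise
          intro n
          exact hout _
        rw [h1, Fm.subst_id]
      have hmemτ : ((Fm.subst1 0 γ A, Fm.subst1 0 γ B) : Fm L × Fm L) ∈ tauApp τ γ :=
        ⟨(A, B), rfl, rfl⟩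
      have hconc := hsem _ hmemτ Aa hmemK v₀ ?_
      · -- the conclusion gives `deriv Γ γ`, contradiction
        apply hnd
        rw [heval, heval] at hconc
        have h2 := hexact hconc
        rw [hNv₀, hNv₀] at h2
        rw [← hSA, ← hSB] at h2
        exact (S.N3 γ).1 h2
      · -- the premises hold in the countermodel
        intro p hp
        rcases Set.mem_iUnion₂.1 hp with ⟨d, hd, hp2⟩
        rcases hp2 with ⟨q, hq, rfl⟩
        rw [hτ, Set.mem_singleton_iff] at hq
        subst hq
        show (Fm.subst1 0 d A).eval Aa v₀ = (Fm.subst1 0 d B).eval Aa v₀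
        rw [heval, heval]
        apply hsound
        rw [hNv₀, hNv₀]
        rw [← hSA, ← hSB]
        exact (S.N3 d).2 (ℒ.axm Γ d hd)

end NGB
namespace NGB

/-- The pack built from a connective of arity at least 2. -/
def binPack {L : Sig} (f : L.Op) (hf : 2 ≤ L.ar f) : DEPack L where
  D := fun u => Fm.op f (fun _ => u)
  E := fun u => Fm.op f (fun i => if (i : ℕ) = 0 then u else Fm.op f (fun _ => u))
  D_inj := by
    intro u v h
    exact congrFun (Fm.op_inj h) ⟨0, by omega⟩
  E_inj := by
    intro u v h
    have h2 := congrFun (Fm.op_inj h) ⟨0, by omega⟩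
    simpa using h2
  D_ne_E := by
    intro u v h
    have h2 := Fm.op_inj h
    have e0 := congrFun h2 ⟨0, by omega⟩
    have e1 := congrFun h2 ⟨1, by omega⟩
    simp only [] at e0 e1
    rw [if_pos (by norm_num)] at e0
    rw [if_neg (by norm_num)] at e1
    subst e0
    have := Fm.size_arg_lt (fun _ => u : Fin (L.ar f) → Fm L) ⟨0, by omega⟩
    rw [← e1] at this
    omega
  D_ne_var := fun u n h => Fm.var_ne_op _ _ _ h.symm
  E_ne_var := fun u n h => Fm.var_ne_op _ _ _ h.symm
  D_subst := fun u σ => rfl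
  E_subst := by
    intro u σ
    show Fm.op f _ = Fm.op f _
    congr 1
    funext i
    by_cases hi : (i : ℕ) = 0
    · simp [hi, Fm.subst]
    · simp [hi, Fm.subst]
  D_size := by
    intro u
    exact Fm.size_arg_lt (fun _ => u : Fin (L.ar f) → Fm L) ⟨0, by omega⟩
  E_size := by
    intro u
    have := Fm.size_arg_lt
      (fun i : Fin (L.ar f) => if (i : ℕ) = 0 then u else Fm.op f (fun _ => u)) ⟨0, by omega⟩
    simpa using this
  D_vars := by
    intro u
    show (⋃ _i : Fin (L.ar f), u.vars) = u.vars
    haveI : Nonempty (Fin (L.ar f)) := ⟨⟨0, by omega⟩⟩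
    exact Set.iUnion_const u.vars
  E_vars := by
    intro u
    show (⋃ i : Fin (L.ar f), (if (i:ℕ) = 0 then u else Fm.op f (fun _ => u)).vars) = u.vars
    apply Set.eq_of_subset_of_subset
    · apply Set.iUnion_subset
      intro i
      by_cases hi : (i:ℕ) = 0
      · rw [if_pos hi]
      · rw [if_neg hi]
        show (⋃ _j : Fin (L.ar f), u.vars) ⊆ u.vars
        apply Set.iUnion_subset
        intro _
        exact subset_rfl
    · intro n hn
      apply Set.mem_iUnion.2
      refine ⟨⟨0, by omega⟩, ?_⟩
      rw [if_pos rfl]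
      exact hn
  D_match := by
    intro c ρ V h
    cases c with
    | var n =>
      by_cases hn : n = 0
      · subst hn; exact Or.inl rfl
      · rw [Fm.subst1_var_ne hn] at h
        exact absurd h (Fm.var_ne_op _ _ _)
    | op j cs =>
      rw [Fm.subst1_op] at h
      injection h with hj hargs
      subst hj
      have hargs' := eq_of_heq hargs
      refine Or.inr ⟨cs ⟨0, by omega⟩, Fm.size_arg_lt cs _, ?_⟩
      exact congrFun hargs' ⟨0, by omega⟩
  E_match := by
    intro c ρ V h
    cases c with
    | var n =>
      by_cases hn : n = 0
      · subst hn; exact Or.inl rfl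
      · rw [Fm.subst1_var_ne hn] at h
        exact absurd h (Fm.var_ne_op _ _ _)
    | op j cs =>
      rw [Fm.subst1_op] at h
      injection h with hj hargs
      subst hj
      have hargs' := eq_of_heq hargs
      refine Or.inr ⟨cs ⟨0, by omega⟩, Fm.size_arg_lt cs _, ?_⟩
      have := congrFun hargs' ⟨0, by omega⟩
      simpa using this
  N_D := by
    intro R' N' hN u
    exact hN f (fun _ => u)
  N_E := by
    intro R' N' hN hRD u
    have h1 := hN f (fun i : Fin (L.ar f) => if (i : ℕ) = 0 then u else Fm.op f (fun _ => u))
    rw [h1]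
    congr 1
    show Fm.op f _ = Fm.op f _
    congr 1
    funext i
    by_cases hi : (i : ℕ) = 0
    · simp [hi]
    · simp only [hi, if_false]
      have h2 := hN f (fun _ => u)
      have h3 := hRD (N' u)
      show N' (Fm.op f (fun _ => u)) = Fm.op f (fun _ => N' u)
      rw [h2]
      exact h3

/-- The pack built from two distinct unary connectives. -/
def unPack {L : Sig} (g h : L.Op) (hgh : g ≠ h) (hg : L.ar g = 1) (hh : L.ar h = 1) :
    DEPack L where
  D := fun u => Fm.op h (fun _ => u)
  E := fun u => Fm.op g (fun _ => u)
  D_inj := by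
    intro u v hE
    exact congrFun (Fm.op_inj hE) ⟨0, by omega⟩
  E_inj := by
    intro u v hE
    exact congrFun (Fm.op_inj hE) ⟨0, by omega⟩
  D_ne_E := by
    intro u v hE
    injection hE with h1 _
    exact hgh h1.symm
  D_ne_var := fun u n hE => Fm.var_ne_op _ _ _ hE.symm
  E_ne_var := fun u n hE => Fm.var_ne_op _ _ _ hE.symm
  D_subst := fun u σ => rfl
  E_subst := fun u σ => rfl
  D_size := fun u => Fm.size_arg_lt (fun _ => u : Fin (L.ar h) → Fm L) ⟨0, by omega⟩
  E_size := fun u => Fm.size_arg_lt (fun _ => u : Fin (L.ar g) → Fm L) ⟨0, by omega⟩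
  D_vars := by
    intro u
    show (⋃ _i : Fin (L.ar h), u.vars) = u.vars
    haveI : Nonempty (Fin (L.ar h)) := ⟨⟨0, by omega⟩⟩
    exact Set.iUnion_const u.vars
  E_vars := by
    intro u
    show (⋃ _i : Fin (L.ar g), u.vars) = u.vars
    haveI : Nonempty (Fin (L.ar g)) := ⟨⟨0, by omega⟩⟩
    exact Set.iUnion_const u.vars
  D_match := by
    intro c ρ V hE
    cases c with
    | var n =>
      by_cases hn : n = 0
      · subst hn; exact Or.inl rfl
      · rw [Fm.subst1_var_ne hn] at hE
        exact absurd hE (Fm.var_ne_op _ _ _)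
    | op j cs =>
      rw [Fm.subst1_op] at hE
      injection hE with hj hargs
      subst hj
      have hargs' := eq_of_heq hargs
      exact Or.inr ⟨cs ⟨0, by omega⟩, Fm.size_arg_lt cs _, congrFun hargs' ⟨0, by omega⟩⟩
  E_match := by
    intro c ρ V hE
    cases c with
    | var n =>
      by_cases hn : n = 0
      · subst hn; exact Or.inl rfl
      · rw [Fm.subst1_var_ne hn] at hE
        exact absurd hE (Fm.var_ne_op _ _ _)
    | op j cs =>
      rw [Fm.subst1_op] at hE
      injection hE with hj hargs
      subst hj
      have hargs' := eq_of_heq hargs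
      exact Or.inr ⟨cs ⟨0, by omega⟩, Fm.size_arg_lt cs _, congrFun hargs' ⟨0, by omega⟩⟩
  N_D := by
    intro R' N' hN u
    exact hN h (fun _ => u)
  N_E := by
    intro R' N' hN _ u
    exact hN g (fun _ => u)

end NGB
/-- If `ℒ` is not graph-based and has two distinct logically equivalent formulas `φ`, `ψ`
with `Var(φ) ∪ Var(ψ) = {x}`, then `ℒ` has an algebraic semantics. -/
theorem non_graph_based_sufficient {L : Sig} (hL : NotGraphBased L) (ℒ : Logic L)
    (φ ψ : Fm L) (hne : φ ≠ ψ) (hvars : φ.vars ∪ ψ.vars = ({0} : Set ℕ))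
    (heq : LogEquiv ℒ φ ψ) :
    HasAlgSem ℒ := by
  obtain ⟨P⟩ : Nonempty (NGB.DEPack L) := by
    rcases hL with ⟨g, h, hgh, hg, hh⟩ | ⟨f, hf⟩
    · exact ⟨NGB.unPack g h hgh hg hh⟩
    · exact ⟨NGB.binPack f hf⟩
  have hvφ : φ.vars ⊆ {0} := by
    rw [← hvars]; exact Set.subset_union_left
  have hvψ : ψ.vars ⊆ {0} := by
    rw [← hvars]; exact Set.subset_union_right
  have h0 : (0:ℕ) ∈ φ.vars ∪ ψ.vars := by rw [hvars]; rfl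
  rcases h0 with h0φ | h0ψ
  · exact NGB.hasAlgSem_of_pack P ℒ ψ φ (Ne.symm hne) hvψ hvφ h0φ
      (NGB.logEquiv_symm ℒ heq)
  · exact NGB.hasAlgSem_of_pack P ℒ φ ψ hne hvφ hvψ h0ψ heq
end
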